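/- arXiv:2508.06927 — 6 statements merged into one kernel-verified Lean document; each statement's English description precedes it below -/
import Mathlib

section
/- (Curve construction from the proof of Theorem 3.1) Let B be a nonempty finite index set and for each j ∈ B let q_j : ℝⁿ → ℝ be twice continuously differentiable. Let x ∈ ℝⁿ and v ∈ ℝⁿ be such that q_j(x) = 0 and ⟨∇q_j(x), v⟩ = 0 for all j ∈ B, and the family {∇q_j(x) : j ∈ B} is linearly independent. Then there exist t̄ > 0 and a continuously differentiable curve x̃ : (−t̄, t̄) → ℝⁿ such that x̃(0) = x, x̃′(0) = v, and q_j(x̃(t)) = 0 for all t ∈ (−t̄, t̄) and all j ∈ B. -/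
open Filter Topology Metric Set
open scoped RealInnerProductSpace

noncomputable section

/-- The Bouligand (contingent) tangent cone to `s` at `x`. -/
def BCone {V : Type*} [NormedAddCommGroup V] [NormedSpace ℝ V] (s : Set V) (x : V) : Set V :=
  {u | ∃ (t : ℕ → ℝ) (c : ℕ → V), (∀ k, 0 < t k) ∧ Filter.Tendsto t Filter.atTop (𝓝 0) ∧
    Filter.Tendsto c Filter.atTop (𝓝 u) ∧ ∀ k, x + t k • c k ∈ s}

/-- The (convex) normal cone to `K` at `w`; empty when `w ∉ K`. -/
def NCone {V : Type*} [NormedAddCommGroup V] [InnerProductSpace ℝ V] (K : Set V) (w : V) :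
    Set V :=
  {z | w ∈ K ∧ ∀ y ∈ K, ⟪z, y - w⟫ ≤ 0}

variable {n : ℕ} {ι : Type*} [Fintype ι] [DecidableEq ι]

/-- The feasible set `Γ` of the nonlinear program. -/
def Feas (E I : Finset ι) (q : ι → EuclideanSpace ℝ (Fin n) → ℝ) :
    Set (EuclideanSpace ℝ (Fin n)) :=
  {x | (∀ i ∈ E, q i x = 0) ∧ ∀ i ∈ I, q i x ≤ 0}

/-- The set of active inequality constraints at `x`. -/
def ActiveI (I : Finset ι) (q : ι → EuclideanSpace ℝ (Fin n) → ℝ)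
    (x : EuclideanSpace ℝ (Fin n)) : Finset ι :=
  I.filter fun i => q i x = 0

/-- The Lagrange multiplier set `Λ(x, x*)`. -/
def Mult (I : Finset ι) (q : ι → EuclideanSpace ℝ (Fin n) → ℝ)
    (x xs : EuclideanSpace ℝ (Fin n)) : Set (EuclideanSpace ℝ ι) :=
  {lam | ∑ i, lam i • gradient (q i) x = xs ∧ ∀ i ∈ I, 0 ≤ lam i ∧ lam i * q i x = 0}

/-- `I⁺(λ)`: the inequality indices with positive multiplier. -/
def IplusF (I : Finset ι) (lam : EuclideanSpace ℝ ι) : Finset ι :=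
  I.filter fun i => 0 < lam i

/-- `I⁺(x, x*) = ∪_{λ ∈ Λ(x,x*)} I⁺(λ)`. -/
def IplusSet (I : Finset ι) (q : ι → EuclideanSpace ℝ (Fin n) → ℝ)
    (x xs : EuclideanSpace ℝ (Fin n)) : Set ι :=
  {i | ∃ lam ∈ Mult I q x xs, i ∈ IplusF I lam}

/-- Rank of the family of gradients `{∇q_i(x) : i ∈ s}`. -/
def RankAt (q : ι → EuclideanSpace ℝ (Fin n) → ℝ) (s : Finset ι)
    (x : EuclideanSpace ℝ (Fin n)) : ℕ :=
  Module.finrank ℝ (Submodule.span ℝ ((fun i => gradient (q i) x) '' ↑s))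

/-- The relaxed constant rank constraint qualification at `xbar`. -/
def RCRCQat (E I : Finset ι) (q : ι → EuclideanSpace ℝ (Fin n) → ℝ)
    (xbar : EuclideanSpace ℝ (Fin n)) : Prop :=
  ∃ U ∈ 𝓝 xbar, ∀ J ⊆ ActiveI I q xbar, ∀ x ∈ U, ∀ y ∈ U,
    RankAt q (E ∪ J) x = RankAt q (E ∪ J) y

/-- The set `Θ = {0}^E × ℝ₋^I`. -/
def Theta (E I : Finset ι) : Set (EuclideanSpace ℝ ι) :=
  {y | (∀ i ∈ E, y i = 0) ∧ ∀ i ∈ I, y i ≤ 0}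

/-- The metric subregularity constraint qualification at `x` with modulus `κ`. -/
def MSCQat (E I : Finset ι) (q : ι → EuclideanSpace ℝ (Fin n) → ℝ)
    (x : EuclideanSpace ℝ (Fin n)) (κ : ℝ) : Prop :=
  ∃ U ∈ 𝓝 x, ∀ u ∈ U,
    Metric.infDist u (Feas E I q) ≤
      κ * Metric.infDist (show EuclideanSpace ℝ ι from WithLp.toLp 2 (fun i => q i u)) (Theta E I)

/-- The critical cone `K(x, x*) = T_Γ(x) ∩ {x*}^⊥`. -/
def Crit (E I : Finset ι) (q : ι → EuclideanSpace ℝ (Fin n) → ℝ)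
    (x xs : EuclideanSpace ℝ (Fin n)) : Set (EuclideanSpace ℝ (Fin n)) :=
  BCone (Feas E I q) x ∩ {v | ⟪xs, v⟫ = 0}

/-- Hessian of `f` at `x` applied to `w` (derivative of the gradient map). -/
def HessApp (f : EuclideanSpace ℝ (Fin n) → ℝ) (x w : EuclideanSpace ℝ (Fin n)) :
    EuclideanSpace ℝ (Fin n) :=
  fderiv ℝ (fun y => gradient f y) x w

/-- `∇²⟨λ, q⟩(x) w = Σ_i λ_i ∇²q_i(x) w`. -/
def HessComb (q : ι → EuclideanSpace ℝ (Fin n) → ℝ) (lam : EuclideanSpace ℝ ι)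
    (x w : EuclideanSpace ℝ (Fin n)) : EuclideanSpace ℝ (Fin n) :=
  ∑ i, lam i • HessApp (q i) x w

/-- The quadratic form `⟨v, ∇²⟨λ,q⟩(x) v⟩`. -/
def QuadComb (q : ι → EuclideanSpace ℝ (Fin n) → ℝ) (lam : EuclideanSpace ℝ ι)
    (x v : EuclideanSpace ℝ (Fin n)) : ℝ :=
  ⟪v, HessComb q lam x v⟫

/-- `Λ(x, x*; v)`: the argmax of the quadratic form over `Λ(x, x*)`. -/
def MultArgmax (I : Finset ι) (q : ι → EuclideanSpace ℝ (Fin n) → ℝ)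
    (x xs v : EuclideanSpace ℝ (Fin n)) : Set (EuclideanSpace ℝ ι) :=
  {lam ∈ Mult I q x xs | ∀ mu ∈ Mult I q x xs, QuadComb q mu x v ≤ QuadComb q lam x v}

/-- The set `G = {(u, u*) : u ∈ Γ, Λ(u, u*) ≠ ∅}`. -/
def GSet (E I : Finset ι) (q : ι → EuclideanSpace ℝ (Fin n) → ℝ) :
    Set (EuclideanSpace ℝ (Fin n) × EuclideanSpace ℝ (Fin n)) :=
  {p | p.1 ∈ Feas E I q ∧ (Mult I q p.1 p.2).Nonempty}

/-- Argmin set of the tilted problem `M_γ(v)`. -/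
def MArgmin (φ : EuclideanSpace ℝ (Fin n) → ℝ) (Γ : Set (EuclideanSpace ℝ (Fin n)))
    (xbar : EuclideanSpace ℝ (Fin n)) (γ : ℝ) (v : EuclideanSpace ℝ (Fin n)) :
    Set (EuclideanSpace ℝ (Fin n)) :=
  {x ∈ Γ ∩ Metric.closedBall xbar γ |
    ∀ y ∈ Γ ∩ Metric.closedBall xbar γ, φ x - ⟪v, x⟫ ≤ φ y - ⟪v, y⟫}

/-- Tilt-stable local minimizer with modulus `κ`. -/
def TiltStableWith (φ : EuclideanSpace ℝ (Fin n) → ℝ) (Γ : Set (EuclideanSpace ℝ (Fin n)))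
    (xbar : EuclideanSpace ℝ (Fin n)) (κ : ℝ) : Prop :=
  ∃ γ > (0:ℝ), ∃ W ∈ 𝓝 (0 : EuclideanSpace ℝ (Fin n)),
    ∃ m : EuclideanSpace ℝ (Fin n) → EuclideanSpace ℝ (Fin n),
      m 0 = xbar ∧ (∀ v ∈ W, MArgmin φ Γ xbar γ v = {m v}) ∧
      ∀ v₁ ∈ W, ∀ v₂ ∈ W, ‖m v₁ - m v₂‖ ≤ κ * ‖v₁ - v₂‖

/-- Tilt-stable local minimizer. -/
def TiltStable (φ : EuclideanSpace ℝ (Fin n) → ℝ) (Γ : Set (EuclideanSpace ℝ (Fin n)))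
    (xbar : EuclideanSpace ℝ (Fin n)) : Prop :=
  ∃ κ > (0:ℝ), TiltStableWith φ Γ xbar κ

/-- The exact bound of tilt stability. -/
def TiltBound (φ : EuclideanSpace ℝ (Fin n) → ℝ) (Γ : Set (EuclideanSpace ℝ (Fin n)))
    (xbar : EuclideanSpace ℝ (Fin n)) : ℝ :=
  sInf {κ : ℝ | 0 < κ ∧ TiltStableWith φ Γ xbar κ}



theorem curve_aux {n : ℕ} {κ : Type*} [Fintype κ] [DecidableEq κ]
    (g : κ → EuclideanSpace ℝ (Fin n) → ℝ) (hg : ∀ j, ContDiff ℝ 2 (g j))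
    (x v : EuclideanSpace ℝ (Fin n)) (hg0 : ∀ j, g j x = 0)
    (horth : ∀ j, ⟪gradient (g j) x, v⟫ = 0)
    (hli : LinearIndependent ℝ (fun j => gradient (g j) x)) :
    ∃ tb > (0:ℝ), ∃ c : ℝ → EuclideanSpace ℝ (Fin n),
      ContDiffOn ℝ 1 c (Set.Ioo (-tb) tb) ∧ c 0 = x ∧ HasDerivAt c v 0 ∧
      ∀ t ∈ Set.Ioo (-tb) tb, ∀ j, g j (c t) = 0 := by
  classical
  set gv : κ → EuclideanSpace ℝ (Fin n) := fun j => gradient (g j) x with hgv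
  set Dψ : ℝ × EuclideanSpace ℝ κ →L[ℝ] EuclideanSpace ℝ (Fin n) :=
    (ContinuousLinearMap.fst ℝ ℝ (EuclideanSpace ℝ κ)).smulRight v +
      ∑ k, ((EuclideanSpace.proj k).comp (ContinuousLinearMap.snd ℝ ℝ (EuclideanSpace ℝ κ))).smulRight (gv k)
    with hDψ
  have hDψ_apply : ∀ p : ℝ × EuclideanSpace ℝ κ, Dψ p = p.1 • v + ∑ k, p.2 k • gv k := by
    intro p
    simp [hDψ, ContinuousLinearMap.sum_apply]
  set ψ : ℝ × EuclideanSpace ℝ κ → EuclideanSpace ℝ (Fin n) := fun p => x + Dψ p with hψ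
  have hψ0 : ψ (0, 0) = x := by simp [hψ, Prod.mk_zero_zero]
  have hgrad : ∀ (j : κ) (h : EuclideanSpace ℝ (Fin n)), fderiv ℝ (g j) x h = ⟪gv j, h⟫ :=
    fun j h => (InnerProductSpace.toDual_symm_apply).symm
  set e := EuclideanSpace.equiv κ ℝ with he
  set F : ℝ × EuclideanSpace ℝ κ → EuclideanSpace ℝ κ := fun p => e.symm fun j => g j (ψ p) with hF
  set F' : ℝ × EuclideanSpace ℝ κ →L[ℝ] EuclideanSpace ℝ κ :=
    (e.symm : (κ → ℝ) →L[ℝ] EuclideanSpace ℝ κ).comp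
      (ContinuousLinearMap.pi fun j => (fderiv ℝ (g j) x).comp Dψ) with hF'
  have hF'app : ∀ (p : ℝ × EuclideanSpace ℝ κ) (j : κ), F' p j = ⟪gv j, Dψ p⟫ := by
    intro p j
    simp [hF', he, hgrad]
  have hFd : HasFDerivAt F F' (0, 0) := by
    have h1 : HasFDerivAt (fun p : ℝ × EuclideanSpace ℝ κ => fun j => g j (ψ p))
        (ContinuousLinearMap.pi fun j => (fderiv ℝ (g j) x).comp Dψ) (0, 0) := by
      rw [hasFDerivAt_pi]
      intro j
      have hqd : HasFDerivAt (g j) (fderiv ℝ (g j) x) (ψ (0, 0)) := by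
        rw [hψ0]
        exact ((hg j).differentiable (by norm_num)).differentiableAt.hasFDerivAt
      have hψd : HasFDerivAt ψ Dψ (0, 0) := Dψ.hasFDerivAt.const_add x
      exact hqd.comp (0, 0) hψd
    have := (e.symm.hasFDerivAt).comp (0, 0) h1
    exact this
  have hFc : ContDiff ℝ 2 F := by
    have hψc : ContDiff ℝ 2 ψ := contDiff_const.add Dψ.contDiff
    have : ContDiff ℝ 2 fun p : ℝ × EuclideanSpace ℝ κ => fun j => g j (ψ p) :=
      contDiff_pi.mpr fun j => ContDiff.comp (hg j) hψc
    exact e.symm.contDiff.comp this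
  set Gm : ℝ × EuclideanSpace ℝ κ → ℝ × EuclideanSpace ℝ κ := fun p => (p.1, F p) with hGm
  set G' : ℝ × EuclideanSpace ℝ κ →L[ℝ] ℝ × EuclideanSpace ℝ κ := (ContinuousLinearMap.fst ℝ ℝ (EuclideanSpace ℝ κ)).prod F' with hG'
  have hGd : HasFDerivAt Gm G' (0, 0) := hasFDerivAt_fst.prodMk hFd
  -- injectivity of G'
  have hker : ∀ p : ℝ × EuclideanSpace ℝ κ, G' p = 0 → p = 0 := by
    intro p hp
    have h1 : p.1 = 0 := congrArg Prod.fst hp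
    have h2 : F' p = 0 := congrArg Prod.snd hp
    set s : EuclideanSpace ℝ (Fin n) := ∑ k, p.2 k • gv k with hs
    have hDp : Dψ p = s := by rw [hDψ_apply, h1]; simp [hs]
    have hsum : ∀ j, ⟪gv j, s⟫ = 0 := by
      intro j
      have := congrArg (fun z : EuclideanSpace ℝ κ => z j) h2
      simpa [hF'app, hDp] using this
    have hss : s = 0 := by
      have : ⟪s, s⟫ = 0 := by
        rw [hs]
        rw [sum_inner]
        refine Finset.sum_eq_zero fun k _ => ?_
        rw [real_inner_smul_left, ← hs, hsum k, mul_zero]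
      exact inner_self_eq_zero.mp this
    have hzero : ∀ k, p.2 k = 0 := Fintype.linearIndependent_iff.mp hli p.2 (by rw [← hs]; exact hss)
    have : p.2 = 0 := by ext k; exact hzero k
    exact Prod.ext h1 this
  have hinj : Function.Injective (G' : ℝ × EuclideanSpace ℝ κ →ₗ[ℝ] ℝ × EuclideanSpace ℝ κ) :=
    LinearMap.ker_eq_bot.mp (LinearMap.ker_eq_bot'.mpr hker)
  have hbij : Function.Bijective (G' : ℝ × EuclideanSpace ℝ κ →ₗ[ℝ] ℝ × EuclideanSpace ℝ κ) :=
    ⟨hinj, LinearMap.injective_iff_surjective.mp hinj⟩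
  set eqv : (ℝ × EuclideanSpace ℝ κ) ≃L[ℝ] (ℝ × EuclideanSpace ℝ κ) :=
    (LinearEquiv.ofBijective (G' : ℝ × EuclideanSpace ℝ κ →ₗ[ℝ] ℝ × EuclideanSpace ℝ κ) hbij).toContinuousLinearEquiv with heqv
  have heqvcoe : (eqv : (ℝ × EuclideanSpace ℝ κ) →L[ℝ] (ℝ × EuclideanSpace ℝ κ)) = G' := by
    ext p <;> rfl
  have hGd' : HasFDerivAt Gm (eqv : (ℝ × EuclideanSpace ℝ κ) →L[ℝ] (ℝ × EuclideanSpace ℝ κ)) (0, 0) := by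
    rw [heqvcoe]; exact hGd
  have hGc : ContDiffAt ℝ 2 Gm (0, 0) := (contDiff_fst.prodMk hFc).contDiffAt
  have strict : HasStrictFDerivAt Gm (eqv : (ℝ × EuclideanSpace ℝ κ) →L[ℝ] (ℝ × EuclideanSpace ℝ κ)) (0, 0) :=
    hGc.hasStrictFDerivAt' hGd' (by norm_num)
  have hz : (fun j => g j (ψ (0, 0))) = (0 : κ → ℝ) := funext fun j => by
    rw [hψ0]; exact hg0 j
  have hF00 : F (0, 0) = 0 := by
    show e.symm (fun j => g j (ψ (0, 0))) = 0
    rw [hz]; exact map_zero _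
  have hGm00 : Gm (0, 0) = (0, 0) := by
    show ((0 : ℝ), F (0, 0)) = (0, 0)
    rw [hF00]
  set inv : ℝ × EuclideanSpace ℝ κ → ℝ × EuclideanSpace ℝ κ := strict.localInverse Gm eqv (0, 0) with hinvdef
  have hright : ∀ᶠ y in 𝓝 ((0, 0) : ℝ × EuclideanSpace ℝ κ), Gm (inv y) = y := by
    have := strict.eventually_right_inverse
    rwa [hGm00] at this
  have hinv00 : inv (0, 0) = (0, 0) := by
    have := strict.localInverse_apply_image
    rwa [hGm00] at this
  have hinvc : ContDiffAt ℝ 2 inv (0, 0) := by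
    have := hGc.to_localInverse hGd' (by norm_num : (2:WithTop ℕ∞) ≠ 0)
    rwa [hGm00] at this
  have hstrictinv : HasStrictFDerivAt inv (eqv.symm : (ℝ × EuclideanSpace ℝ κ) →L[ℝ] (ℝ × EuclideanSpace ℝ κ)) (0, 0) := by
    have := strict.to_localInverse
    rwa [hGm00] at this
  set u : ℝ → EuclideanSpace ℝ κ := fun t => (inv (t, 0)).2 with hu
  set c : ℝ → EuclideanSpace ℝ (Fin n) := fun t => x + Dψ (t, u t) with hc
  have hu0 : u 0 = 0 := by
    show (inv (0, 0)).2 = 0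
    rw [hinv00]
  have hzz : ((0 : ℝ), (0 : EuclideanSpace ℝ κ)) = (0 : ℝ × EuclideanSpace ℝ κ) := Prod.mk_zero_zero
  have hc0 : c 0 = x := by
    show x + Dψ (0, u 0) = x
    rw [hu0, hzz, map_zero, add_zero]
  -- smoothness of c near 0
  have huc : ContDiffAt ℝ 2 u 0 := by
    have hj : ContDiff ℝ 2 fun t : ℝ => ((t, 0) : ℝ × EuclideanSpace ℝ κ) := contDiff_id.prodMk contDiff_const
    have h1 : ContDiffAt ℝ 2 (fun t : ℝ => inv (t, 0)) 0 :=
      ContDiffAt.comp (g := inv) (f := fun t : ℝ => ((t, 0) : ℝ × EuclideanSpace ℝ κ)) 0 hinvc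
        hj.contDiffAt
    exact contDiff_snd.contDiffAt.comp 0 h1
  have hcc : ContDiffAt ℝ 2 c 0 :=
    contDiff_const.contDiffAt.add
      (Dψ.contDiff.contDiffAt.comp 0 (contDiff_id.contDiffAt.prodMk huc))
  -- derivative of c at 0
  have heqv10 : eqv ((1 : ℝ), (0 : EuclideanSpace ℝ κ)) = ((1 : ℝ), (0 : EuclideanSpace ℝ κ)) := by
    have h2 : F' ((1 : ℝ), (0 : EuclideanSpace ℝ κ)) = 0 := by
      ext j
      rw [hF'app, hDψ_apply]
      simp [horth j]
      exact horth j
    have h4 : G' ((1 : ℝ), (0 : EuclideanSpace ℝ κ)) = (1, 0) := by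
      show ((((1 : ℝ), (0 : EuclideanSpace ℝ κ))).1, F' ((1 : ℝ), (0 : EuclideanSpace ℝ κ))) = (1, 0)
      rw [h2]
    have h5 : eqv ((1 : ℝ), (0 : EuclideanSpace ℝ κ)) = G' ((1 : ℝ), (0 : EuclideanSpace ℝ κ)) := by
      rw [← heqvcoe]; rfl
    rw [h5, h4]
  have heqvsymm : eqv.symm ((1 : ℝ), (0 : EuclideanSpace ℝ κ)) = ((1 : ℝ), (0 : EuclideanSpace ℝ κ)) := by
    have h := congrArg eqv.symm heqv10
    rw [ContinuousLinearEquiv.symm_apply_apply] at h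
    exact h.symm
  have hud : HasDerivAt u 0 0 := by
    have h1 : HasDerivAt (fun t : ℝ => ((t, 0) : ℝ × EuclideanSpace ℝ κ)) (1, 0) 0 :=
      (hasDerivAt_id 0).prodMk (hasDerivAt_const 0 0)
    have h2 : HasDerivAt (fun t : ℝ => inv (t, 0)) (eqv.symm (1, 0)) 0 :=
      by have := hstrictinv.hasFDerivAt.comp_hasDerivAt 0 h1; exact this
    rw [heqvsymm] at h2
    have h3 := (ContinuousLinearMap.snd ℝ ℝ (EuclideanSpace ℝ κ)).hasFDerivAt.comp_hasDerivAt 0 h2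
    exact h3
  have hcd : HasDerivAt c v 0 := by
    have h1 : HasDerivAt (fun t : ℝ => ((t, u t) : ℝ × EuclideanSpace ℝ κ)) (1, 0) 0 :=
      (hasDerivAt_id 0).prodMk hud
    have h2 := Dψ.hasFDerivAt.comp_hasDerivAt 0 h1
    have h3 : Dψ ((1 : ℝ), (0 : EuclideanSpace ℝ κ)) = v := by
      rw [hDψ_apply]; simp
    rw [h3] at h2
    have h4 := (hasDerivAt_const (0:ℝ) x).add h2
    rw [zero_add] at h4
    exact h4
  -- constraints hold near 0
  have hqc : ∀ᶠ t in 𝓝 (0 : ℝ), ∀ j, g j (c t) = 0 := by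
    have hcont : Filter.Tendsto (fun t : ℝ => ((t, 0) : ℝ × EuclideanSpace ℝ κ)) (𝓝 0) (𝓝 (0, 0)) :=
      ((continuous_id.prodMk continuous_const).tendsto 0 : _)
    filter_upwards [hcont.eventually hright] with t ht
    intro j
    have h3 : (inv (t, 0)).1 = t := congrArg Prod.fst ht
    have h4 : F ((inv (t, 0)).1, (inv (t, 0)).2) = 0 := congrArg Prod.snd ht
    rw [h3] at h4
    have h5 := congrArg (fun z : EuclideanSpace ℝ κ => e z j) h4
    simpa [hF, hc, hψ] using h5
  obtain ⟨s, hs, hcs⟩ := hcc.contDiffOn (m := 1) (by norm_num) (by simp)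
  have hmem : s ∩ {t | ∀ j, g j (c t) = 0} ∈ 𝓝 (0 : ℝ) := Filter.inter_mem hs hqc
  obtain ⟨ε, hε, hball⟩ := Metric.mem_nhds_iff.mp hmem
  have hsub : Set.Ioo (-ε) ε ⊆ Metric.ball (0:ℝ) ε := by
    intro t ht
    rw [Real.ball_eq_Ioo]
    simpa using ht
  refine ⟨ε, hε, c, ?_, hc0, hcd, ?_⟩
  · exact hcs.mono fun t ht => (hball (hsub ht)).1
  · exact fun t ht j => (hball (hsub ht)).2 j

/-- **Curve construction from the proof of Theorem 3.1.** If `q_j(x) = 0` and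
`⟨∇q_j(x), v⟩ = 0` for all `j ∈ B`, with `{∇q_j(x) : j ∈ B}` linearly independent, then
there is a `C¹` curve `x̃ : (−t̄, t̄) → ℝⁿ` with `x̃(0) = x`, `x̃′(0) = v` and
`q_j(x̃(t)) = 0` for all `t` and all `j ∈ B`. -/
theorem curve_construction
    {n : ℕ} {ι : Type*} (B : Finset ι) (hB : B.Nonempty)
    (q : ι → EuclideanSpace ℝ (Fin n) → ℝ) (hq : ∀ j ∈ B, ContDiff ℝ 2 (q j))
    (x v : EuclideanSpace ℝ (Fin n))
    (hq0 : ∀ j ∈ B, q j x = 0)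
    (horth : ∀ j ∈ B, ⟪gradient (q j) x, v⟫ = 0)
    (hli : LinearIndependent ℝ (fun j : B => gradient (q j) x)) :
    ∃ tb > (0:ℝ), ∃ c : ℝ → EuclideanSpace ℝ (Fin n),
      ContDiffOn ℝ 1 c (Set.Ioo (-tb) tb) ∧ c 0 = x ∧ HasDerivAt c v 0 ∧
      ∀ t ∈ Set.Ioo (-tb) tb, ∀ j ∈ B, q j (c t) = 0 := by
  classical
  obtain ⟨tb, htb, c, h1, h2, h3, h4⟩ :=
    curve_aux (κ := ↥B) (fun j => q j) (fun j => hq j j.2) x v (fun j => hq0 j j.2)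
      (fun j => horth j j.2) hli
  exact ⟨tb, htb, c, h1, h2, h3, fun t ht j hj => h4 t ht ⟨j, hj⟩⟩

end
end

section
/- (Theorem 4.1(i), second assertion) Let x̄ ∈ Γ be a stationary point of the NLP at which RCRCQ holds, and let κ > 0. Then the following are equivalent: (a) ⟨w, ∇²_x L(x̄, λ) w⟩ ≥ (1/κ)‖w‖² for every λ ∈ Λ(x̄) and every w ∈ ℝⁿ with ⟨∇q_i(x̄), w⟩ = 0 for all i ∈ E ∪ I⁺; (b) there exists λ ∈ Λ(x̄) such that ⟨w, ∇²_x L(x̄, λ) w⟩ ≥ (1/κ)‖w‖² for every w ∈ ℝⁿ with ⟨∇q_i(x̄), w⟩ = 0 for all i ∈ E ∪ I⁺. -/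
open Filter Topology Metric Set
open scoped RealInnerProductSpace

noncomputable section

variable {n : ℕ} {ι : Type*} [Fintype ι] [DecidableEq ι]

-- ======================= Auxiliary lemmas =======================

section AuxDet

lemma det_diffAt_aux {X : Type*} [NormedAddCommGroup X] [NormedSpace ℝ X]
    {m : Type*} [Fintype m] [DecidableEq m] {M : X → Matrix m m ℝ} {x : X}
    (h : ∀ i j, DifferentiableAt ℝ (fun x => M x i j) x) :
    DifferentiableAt ℝ (fun x => (M x).det) x := by
  simp only [Matrix.det_apply']
  exact DifferentiableAt.fun_sum fun σ _ =>
    ((HasFDerivAt.finset_prod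
      (fun i (_ : i ∈ Finset.univ) => (h (σ i) i).hasFDerivAt)).differentiableAt).const_mul _

variable {H : Type*} [NormedAddCommGroup H] [InnerProductSpace ℝ H]

lemma gram_mulVec_aux {m : Type*} [Fintype m] {u : m → H} (c : m → ℝ) (j : m) :
    (Matrix.of fun j k => ⟪u j, u k⟫).mulVec c j = ⟪u j, ∑ k, c k • u k⟫ := by
  simp [Matrix.mulVec, dotProduct, inner_sum, real_inner_smul_right, mul_comm]

lemma gram_det_ne_zero_aux {m : Type*} [Fintype m] [DecidableEq m] {u : m → H}
    (h : LinearIndependent ℝ u) :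
    (Matrix.of fun j k => ⟪u j, u k⟫).det ≠ 0 := by
  rw [Ne, ← Matrix.exists_mulVec_eq_zero_iff]
  rintro ⟨c, hc0, hc⟩
  apply hc0
  have key : ∑ k, c k • u k = 0 := by
    have h2 : ⟪∑ j, c j • u j, ∑ k, c k • u k⟫ = 0 := by
      rw [sum_inner]
      simp only [real_inner_smul_left, ← gram_mulVec_aux, hc, Pi.zero_apply, mul_zero,
        Finset.sum_const_zero]
    exact inner_self_eq_zero.mp h2
  have := Fintype.linearIndependent_iff.mp h c key
  funext k; exact this k

lemma lin_indep_of_gram_det_aux {m : Type*} [Fintype m] [DecidableEq m] {u : m → H}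
    (h : (Matrix.of fun j k => ⟪u j, u k⟫).det ≠ 0) :
    LinearIndependent ℝ u := by
  rw [Fintype.linearIndependent_iff]
  intro c hc k
  set G : Matrix m m ℝ := Matrix.of fun j k => ⟪u j, u k⟫ with hG
  have hmv : G.mulVec c = 0 := by
    funext j; rw [hG, gram_mulVec_aux, hc, inner_zero_right]; rfl
  have hu : IsUnit G.det := isUnit_iff_ne_zero.mpr h
  have : c = 0 := by
    have := congrArg (fun v => G⁻¹.mulVec v) hmv
    simpa [Matrix.mulVec_mulVec, Matrix.nonsing_inv_mul G hu] using this
  simp [this]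

lemma gram_inv_mulVec_sum_aux {m : Type*} [Fintype m] [DecidableEq m] {u : m → H} {y : H}
    (h : (Matrix.of fun j k => ⟪u j, u k⟫).det ≠ 0)
    (hy : y ∈ Submodule.span ℝ (Set.range u)) :
    ∑ k, ((Matrix.of fun j k => ⟪u j, u k⟫)⁻¹.mulVec (fun j => ⟪u j, y⟫)) k • u k = y := by
  obtain ⟨β, hβ⟩ := (Submodule.mem_span_range_iff_exists_fun ℝ).mp hy
  set G : Matrix m m ℝ := Matrix.of fun j k => ⟪u j, u k⟫ with hG
  have hb : (fun j => ⟪u j, y⟫) = G.mulVec β := by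
    funext j; rw [← hβ, hG, gram_mulVec_aux]
  rw [hb]
  have hu : IsUnit G.det := isUnit_iff_ne_zero.mpr h
  rw [Matrix.mulVec_mulVec, Matrix.nonsing_inv_mul G hu]
  simpa using hβ

/-- Core lemma: under local constancy of the rank of `{v i x : i ∈ S}`, if `∑ c i • v i x̄ = 0`
and `w ⊥ v i x̄` for all `i ∈ S`, then `⟪w, ∑ c i • (Dv i)(x̄) w⟫ = 0`. -/
lemma perp_hess_zero_aux [FiniteDimensional ℝ H]
    {ι : Type*} [Fintype ι] [DecidableEq ι]
    (S : Finset ι) (v : ι → H → H) {xbar : H}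
    (hv : ∀ i, Differentiable ℝ (v i))
    (hrank : ∀ᶠ x in 𝓝 xbar,
      Module.finrank ℝ (Submodule.span ℝ ((fun i => v i x) '' ↑S))
        = Module.finrank ℝ (Submodule.span ℝ ((fun i => v i xbar) '' ↑S)))
    (c : ι → ℝ) (hc : ∑ i ∈ S, c i • v i xbar = 0)
    (w : H) (hw : ∀ i ∈ S, ⟪v i xbar, w⟫ = 0) :
    ⟪w, ∑ i ∈ S, c i • fderiv ℝ (v i) xbar w⟫ = 0 := by
  classical
  obtain ⟨bs, hbs_sub, hbs_span, hbs_ind⟩ :=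
    exists_linearIndependent ℝ ((fun i => v i xbar) '' ↑S)
  have hbfin : bs.Finite := Set.Finite.subset (S.finite_toSet.image _) hbs_sub
  haveI : Fintype bs := hbfin.fintype
  have hpick : ∀ u : bs, ∃ i, i ∈ S ∧ v i xbar = (u : H) := by
    intro u
    rcases hbs_sub u.2 with ⟨i, hi, hvi⟩
    exact ⟨i, hi, hvi⟩
  choose idx hidxS hidx using hpick
  set vi : bs → H → H := fun u x => v (idx u) x with hvi_def
  have hind : LinearIndependent ℝ (fun u : bs => vi u xbar) := by
    have : (fun u : bs => vi u xbar) = (fun u : bs => (u : H)) := by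
      funext u; exact hidx u
    rw [this]; exact hbs_ind
  set G : H → Matrix bs bs ℝ := fun x => Matrix.of fun j k => ⟪vi j x, vi k x⟫ with hG_def
  have hGdiff : ∀ x : H, ∀ j k, DifferentiableAt ℝ (fun x => G x j k) x := fun x j k =>
    DifferentiableAt.inner ℝ ((hv _) x) ((hv _) x)
  have hdet0 : (G xbar).det ≠ 0 := gram_det_ne_zero_aux hind
  have hdetdiff : DifferentiableAt ℝ (fun x => (G x).det) xbar := det_diffAt_aux (hGdiff xbar)
  have hdetne : ∀ᶠ x in 𝓝 xbar, (G x).det ≠ 0 :=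
    hdetdiff.continuousAt.eventually_ne hdet0
  set y : H → H := fun x => ∑ i ∈ S, c i • v i x with hy_def
  have hy0 : y xbar = 0 := hc
  have hydiff : ∀ x, DifferentiableAt ℝ y x := fun x =>
    DifferentiableAt.fun_sum fun i _ => ((hv i) x).const_smul (c i)
  set bb : H → bs → ℝ := fun x k => ⟪vi k x, y x⟫ with hbb_def
  set d : H → bs → ℝ := fun x => (G x)⁻¹.mulVec (bb x) with hd_def
  have hcard : Module.finrank ℝ (Submodule.span ℝ ((fun i => v i xbar) '' ↑S))
      = Fintype.card bs := by
    have h := finrank_span_eq_card (R := ℝ) hbs_ind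
    rw [Subtype.range_coe] at h
    rw [← hbs_span]; exact h
  have hev : ∀ᶠ x in 𝓝 xbar, ∑ k, d x k • vi k x = y x := by
    filter_upwards [hdetne, hrank] with x hdx hrx
    have hindx : LinearIndependent ℝ (fun u : bs => vi u x) := lin_indep_of_gram_det_aux hdx
    have hle : Submodule.span ℝ (Set.range fun u : bs => vi u x)
        ≤ Submodule.span ℝ ((fun i => v i x) '' ↑S) := by
      apply Submodule.span_mono
      rintro _ ⟨u, rfl⟩
      exact ⟨idx u, hidxS u, rfl⟩
    have heq : Submodule.span ℝ (Set.range fun u : bs => vi u x)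
        = Submodule.span ℝ ((fun i => v i x) '' ↑S) := by
      apply Submodule.eq_of_le_of_finrank_le hle
      rw [hrx, hcard, finrank_span_eq_card hindx]
    have hyx : y x ∈ Submodule.span ℝ (Set.range fun u : bs => vi u x) := by
      rw [heq]
      apply Submodule.sum_smul_mem
      intro i hi
      exact Submodule.subset_span ⟨i, hi, rfl⟩
    exact gram_inv_mulVec_sum_aux hdx hyx
  have hLd : HasDerivAt (fun t : ℝ => xbar + t • w) w 0 := by
    simpa using ((hasDerivAt_id (0:ℝ)).smul_const w).const_add xbar
  set L : ℝ → H := fun t => xbar + t • w with hL_def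
  have hL0 : L 0 = xbar := by simp [hL_def]
  have hevt : ∀ᶠ t in 𝓝 (0:ℝ), ∑ k, d (L t) k • vi k (L t) = y (L t) := by
    have := hLd.continuousAt.preimage_mem_nhds (by rw [hL0]; exact hev)
    filter_upwards [this] with t ht using ht
  have hhg : (fun t => ⟪w, y (L t)⟫) =ᶠ[𝓝 (0:ℝ)]
      (fun t => ∑ k, d (L t) k * ⟪w, vi k (L t)⟫) := by
    filter_upwards [hevt] with t ht
    rw [← ht, inner_sum]
    simp [real_inner_smul_right]
  have hyL : HasDerivAt (fun t => y (L t)) (fderiv ℝ y xbar w) 0 := by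
    have := ((hydiff xbar).hasFDerivAt).comp_hasDerivAt_of_eq 0 hLd hL0.symm
    exact this
  have hh : HasDerivAt (fun t => ⟪w, y (L t)⟫) ⟪w, fderiv ℝ y xbar w⟫ 0 := by
    have := (hasDerivAt_const (0:ℝ) w).inner ℝ hyL
    simpa [hL0, hy0] using this
  have hdiffL : ∀ (f : H → ℝ), DifferentiableAt ℝ f xbar →
      HasDerivAt (fun t => f (L t)) (fderiv ℝ f xbar w) 0 := by
    intro f hf
    have := (hf.hasFDerivAt).comp_hasDerivAt_of_eq 0 hLd hL0.symm
    exact this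
  have hdk : ∀ k : bs, DifferentiableAt ℝ (fun x => d x k) xbar := by
    intro k
    have hrw : (fun x => d x k)
        = fun x => Ring.inverse (G x).det * ((G x).updateCol k (bb x)).det := by
      funext x
      rw [hd_def]
      show ((G x)⁻¹.mulVec (bb x)) k = _
      rw [Matrix.inv_def, Matrix.smul_mulVec, ← Matrix.cramer_eq_adjugate_mulVec]
      simp [Matrix.cramer_apply]
    rw [hrw]
    apply DifferentiableAt.mul
    · simp only [Ring.inverse_eq_inv']
      exact hdetdiff.inv hdet0
    · apply det_diffAt_aux
      intro i j
      by_cases hjk : j = k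
      · subst hjk
        simp only [Matrix.updateCol_self]
        exact DifferentiableAt.inner ℝ ((hv _) xbar) (hydiff xbar)
      · simp only [Matrix.updateCol_ne hjk]
        exact hGdiff xbar i j
  have hd0 : ∀ k : bs, d xbar k = 0 := by
    intro k
    have : bb xbar = 0 := by
      funext j; simp [hbb_def, hy0]
    simp [hd_def, this, Matrix.mulVec_zero]
  have hg : HasDerivAt (fun t => ∑ k, d (L t) k * ⟪w, vi k (L t)⟫) 0 0 := by
    have h1 : HasDerivAt (fun t => ∑ k, d (L t) k * ⟪w, vi k (L t)⟫)
        (∑ k : bs, ((fderiv ℝ (fun x => d x k) xbar w) * ⟪w, vi k (L 0)⟫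
          + d (L 0) k * (fderiv ℝ (fun x => ⟪w, vi k x⟫) xbar w))) 0 := by
      apply HasDerivAt.fun_sum
      intro k _
      exact (hdiffL _ (hdk k)).mul
        (hdiffL _ (DifferentiableAt.inner ℝ (differentiableAt_const w) ((hv _) xbar)))
    have hz : (∑ k : bs, ((fderiv ℝ (fun x => d x k) xbar w) * ⟪w, vi k (L 0)⟫
        + d (L 0) k * (fderiv ℝ (fun x => ⟪w, vi k x⟫) xbar w))) = 0 := by
      apply Finset.sum_eq_zero
      intro k _
      rw [hL0, hd0 k]
      have : ⟪w, vi k xbar⟫ = 0 := by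
        rw [real_inner_comm]; exact hw (idx k) (hidxS k)
      rw [this]; ring
    rwa [hz] at h1
  have hkey : ⟪w, fderiv ℝ y xbar w⟫ = 0 := by
    have h0 : HasDerivAt (fun t => ⟪w, y (L t)⟫) 0 0 :=
      hg.congr_of_eventuallyEq hhg
    exact hh.unique h0
  have hfd : fderiv ℝ y xbar w = ∑ i ∈ S, c i • fderiv ℝ (v i) xbar w := by
    have h1 : fderiv ℝ y xbar = ∑ i ∈ S, fderiv ℝ (fun x => c i • v i x) xbar := by
      rw [hy_def]
      exact fderiv_fun_sum fun i _ => ((hv i) xbar).const_smul (c i)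
    have h2 : ∀ i, fderiv ℝ (fun x => c i • v i x) xbar = c i • fderiv ℝ (v i) xbar :=
      fun i => fderiv_const_smul ((hv i) xbar) (c i)
    rw [h1]
    simp only [h2]
    rw [ContinuousLinearMap.sum_apply]
    simp
  rwa [hfd] at hkey

end AuxDet

section AuxGrad

variable {H : Type*} [NormedAddCommGroup H] [InnerProductSpace ℝ H] [CompleteSpace H]

/-- The inverse of `toDual` as a genuinely `ℝ`-linear continuous map. -/
def fromDualCLM : (H →L[ℝ] ℝ) →L[ℝ] H where
  toFun := fun φ => (InnerProductSpace.toDual ℝ H).symm φ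
  map_add' := fun φ ψ => by simp
  map_smul' := fun c φ => by
    simp [map_smulₛₗ, starRingEnd_apply, star_trivial]
  cont := (InnerProductSpace.toDual ℝ H).symm.continuous

lemma gradient_eq_fromDual (f : H → ℝ) (x : H) :
    gradient f x = fromDualCLM (fderiv ℝ f x) := rfl

lemma grad_differentiable {f : H → ℝ} (hf : ContDiff ℝ 2 f) :
    Differentiable ℝ (fun x => gradient f x) := by
  have h1 : ContDiff ℝ 1 (fderiv ℝ f) := hf.fderiv_right (by norm_num)
  exact fromDualCLM.differentiable.comp (h1.differentiable one_ne_zero)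

lemma gradient_comb {ι : Type*} [Fintype ι]
    {q : ι → H → ℝ} (hq : ∀ i, Differentiable ℝ (q i))
    {φ : H → ℝ} (hφ : Differentiable ℝ φ) (lam : ι → ℝ) (x : H) :
    gradient (fun y => φ y + ∑ i, lam i * q i y) x
      = gradient φ x + ∑ i, lam i • gradient (q i) x := by
  rw [gradient_eq_fromDual]
  have hfd : fderiv ℝ (fun y => φ y + ∑ i, lam i * q i y) x
      = fderiv ℝ φ x + ∑ i, lam i • fderiv ℝ (q i) x := by
    have hds : DifferentiableAt ℝ (fun y => ∑ i, lam i * q i y) x :=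
      DifferentiableAt.fun_sum fun i _ => ((hq i) x).const_mul _
    rw [show (fun y => φ y + ∑ i, lam i * q i y)
        = (fun y => φ y + (fun z => ∑ i, lam i * q i z) y) from rfl,
      fderiv_fun_add (hφ x) hds]
    congr 1
    rw [fderiv_fun_sum (fun i _ => ((hq i) x).const_mul _)]
    exact Finset.sum_congr rfl fun i _ => fderiv_const_mul ((hq i) x) (lam i)
  rw [hfd, map_add, map_sum]
  simp only [map_smul]
  rfl

end AuxGrad

lemma hess_comb_apply {n : ℕ} {ι : Type*} [Fintype ι]
    {q : ι → EuclideanSpace ℝ (Fin n) → ℝ} (hq : ∀ i, ContDiff ℝ 2 (q i))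
    {φ : EuclideanSpace ℝ (Fin n) → ℝ} (hφ : ContDiff ℝ 2 φ) (lam : ι → ℝ)
    (xbar w : EuclideanSpace ℝ (Fin n)) :
    HessApp (fun y => φ y + ∑ i, lam i * q i y) xbar w
      = HessApp φ xbar w
        + ∑ i, lam i • fderiv ℝ (fun x => gradient (q i) x) xbar w := by
  have hdφ : Differentiable ℝ φ := hφ.differentiable (by norm_num)
  have hdq : ∀ i, Differentiable ℝ (q i) := fun i => (hq i).differentiable (by norm_num)
  have hgradeq : (fun x => gradient (fun y => φ y + ∑ i, lam i * q i y) x)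
      = fun x => gradient φ x + ∑ i, lam i • gradient (q i) x := by
    funext x
    exact gradient_comb hdq hdφ lam x
  have hdgφ := grad_differentiable hφ
  have hdgq : ∀ i, Differentiable ℝ fun x => gradient (q i) x :=
    fun i => grad_differentiable (hq i)
  show fderiv ℝ (fun x => gradient (fun y => φ y + ∑ i, lam i * q i y) x) xbar w = _
  rw [hgradeq, fderiv_fun_add (hdgφ xbar)
      (DifferentiableAt.fun_sum (A := fun i x => lam i • gradient (q i) x) fun i _ => ((hdgq i) xbar).const_smul (lam i)),
    fderiv_fun_sum (A := fun i x => lam i • gradient (q i) x) (fun i _ => ((hdgq i) xbar).const_smul (lam i))]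
  have h2 : ∀ i, fderiv ℝ (fun x => lam i • gradient (q i) x) xbar
      = lam i • fderiv ℝ (fun x => gradient (q i) x) xbar :=
    fun i => fderiv_const_smul ((hdgq i) xbar) (lam i)
  simp only [h2, ContinuousLinearMap.add_apply, ContinuousLinearMap.sum_apply,
    ContinuousLinearMap.coe_smul', Pi.smul_apply]
  rfl


/-- **Theorem 4.1(i), second assertion.** At a stationary point `x̄ ∈ Γ` satisfying RCRCQ, the
uniform positive-definiteness condition over all multipliers `λ ∈ Λ(x̄)` is equivalent to the
same condition for a single multiplier `λ ∈ Λ(x̄)`. -/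
theorem tilt_stable_char_single_multiplier
    {n : ℕ} {ι : Type*} [Fintype ι] [DecidableEq ι] [Nonempty ι]
    (E I : Finset ι) (hdisj : Disjoint E I) (hunion : E ∪ I = Finset.univ)
    (q : ι → EuclideanSpace ℝ (Fin n) → ℝ) (hq : ∀ i, ContDiff ℝ 2 (q i))
    (φ : EuclideanSpace ℝ (Fin n) → ℝ) (hφ : ContDiff ℝ 2 φ)
    (xbar : EuclideanSpace ℝ (Fin n)) (hfeas : xbar ∈ Feas E I q)
    (hstat : (Mult I q xbar (-gradient φ xbar)).Nonempty)
    (hrcrcq : RCRCQat E I q xbar)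
    (κ : ℝ) (hκ : 0 < κ) :
    (∀ lam ∈ Mult I q xbar (-gradient φ xbar),
      ∀ w : EuclideanSpace ℝ (Fin n),
        (∀ i, (i ∈ E ∨ i ∈ IplusSet I q xbar (-gradient φ xbar)) →
          ⟪gradient (q i) xbar, w⟫ = 0) →
        (1 / κ) * ‖w‖ ^ 2 ≤
          ⟪w, HessApp (fun y => φ y + ∑ i, lam i * q i y) xbar w⟫) ↔
    (∃ lam ∈ Mult I q xbar (-gradient φ xbar),
      ∀ w : EuclideanSpace ℝ (Fin n),
        (∀ i, (i ∈ E ∨ i ∈ IplusSet I q xbar (-gradient φ xbar)) →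
          ⟪gradient (q i) xbar, w⟫ = 0) →
        (1 / κ) * ‖w‖ ^ 2 ≤
          ⟪w, HessApp (fun y => φ y + ∑ i, lam i * q i y) xbar w⟫) := by
  classical
  constructor
  · intro hall
    obtain ⟨lam, hlam⟩ := hstat
    exact ⟨lam, hlam, hall lam hlam⟩
  · rintro ⟨lam, hlam, hbd⟩ mu hmu w hwperp
    set xs := -gradient φ xbar with hxs
    -- the index set S = E ∪ J
    set J : Finset ι := (ActiveI I q xbar).filter
      (fun i => i ∈ IplusSet I q xbar xs) with hJ_def
    set S : Finset ι := E ∪ J with hS_def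
    set c : ι → ℝ := fun i => mu i - lam i with hc_def
    -- multipliers vanish off S
    have hvanish : ∀ nu ∈ Mult I q xbar xs, ∀ i, i ∉ S → nu i = 0 := by
      intro nu hnu i hiS
      have hiE : i ∉ E := fun h => hiS (Finset.mem_union_left _ h)
      have hiI : i ∈ I := by
        have : i ∈ E ∪ I := hunion ▸ Finset.mem_univ i
        rcases Finset.mem_union.mp this with h | h
        · exact absurd h hiE
        · exact h
      obtain ⟨hge, hprod⟩ := hnu.2 i hiI
      by_contra hne
      have hpos : 0 < nu i := lt_of_le_of_ne hge (Ne.symm hne)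
      have hq0 : q i xbar = 0 := by
        rcases mul_eq_zero.mp hprod with h | h
        · exact absurd h hne
        · exact h
      apply hiS
      apply Finset.mem_union_right
      rw [hJ_def, Finset.mem_filter]
      refine ⟨by rw [ActiveI, Finset.mem_filter]; exact ⟨hiI, hq0⟩, ?_⟩
      exact ⟨nu, hnu, by rw [IplusF, Finset.mem_filter]; exact ⟨hiI, hpos⟩⟩
    have hcS : ∀ i, i ∉ S → c i = 0 := by
      intro i hiS
      show mu i - lam i = 0
      rw [hvanish mu hmu i hiS, hvanish lam hlam i hiS, sub_zero]
    -- gradients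
    set v : ι → EuclideanSpace ℝ (Fin n) → EuclideanSpace ℝ (Fin n) :=
      fun i x => gradient (q i) x with hv_def
    have hvdiff : ∀ i, Differentiable ℝ (v i) := fun i => grad_differentiable (hq i)
    -- ∑_{i∈S} c i • v i xbar = 0
    have hsum0 : ∑ i ∈ S, c i • v i xbar = 0 := by
      have h1 : ∑ i, c i • v i xbar = 0 := by
        have := hmu.1
        have h2 := hlam.1
        calc ∑ i, c i • v i xbar
            = (∑ i, mu i • v i xbar) - ∑ i, lam i • v i xbar := by
              rw [← Finset.sum_sub_distrib]
              exact Finset.sum_congr rfl fun i _ => by rw [hc_def, sub_smul]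
          _ = xs - xs := by rw [this, h2]
          _ = 0 := sub_self xs
      rw [← h1]
      apply Finset.sum_subset (Finset.subset_univ S)
      intro i _ hiS
      rw [hcS i hiS, zero_smul]
    -- orthogonality
    have hworth : ∀ i ∈ S, ⟪v i xbar, w⟫ = 0 := by
      intro i hi
      rcases Finset.mem_union.mp hi with h | h
      · exact hwperp i (Or.inl h)
      · rw [hJ_def, Finset.mem_filter] at h
        exact hwperp i (Or.inr h.2)
    -- rank constancy
    obtain ⟨U, hU, hUrank⟩ := hrcrcq
    have hJsub : J ⊆ ActiveI I q xbar := by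
      rw [hJ_def]; exact Finset.filter_subset _ _
    have hxbarU : xbar ∈ U := mem_of_mem_nhds hU
    have hrank : ∀ᶠ x in 𝓝 xbar,
        Module.finrank ℝ (Submodule.span ℝ ((fun i => v i x) '' ↑S))
          = Module.finrank ℝ (Submodule.span ℝ ((fun i => v i xbar) '' ↑S)) := by
      filter_upwards [hU] with x hx
      exact hUrank J hJsub x hx xbar hxbarU
    -- the key vanishing
    have hkey : ⟪w, ∑ i ∈ S, c i • fderiv ℝ (v i) xbar w⟫ = 0 :=
      perp_hess_zero_aux S v hvdiff hrank c hsum0 w hworth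
    -- Hessian decomposition
    have hdecomp : ∀ nu : EuclideanSpace ℝ ι,
        HessApp (fun y => φ y + ∑ i, nu i * q i y) xbar w
          = HessApp φ xbar w + ∑ i, nu i • fderiv ℝ (v i) xbar w :=
      fun nu => hess_comb_apply hq hφ (fun i => nu i) xbar w
    have hdiff : HessApp (fun y => φ y + ∑ i, mu i * q i y) xbar w
        - HessApp (fun y => φ y + ∑ i, lam i * q i y) xbar w
        = ∑ i ∈ S, c i • fderiv ℝ (v i) xbar w := by
      rw [hdecomp mu, hdecomp lam]
      have h1 : ∑ i, mu i • fderiv ℝ (v i) xbar w - ∑ i, lam i • fderiv ℝ (v i) xbar w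
          = ∑ i, c i • fderiv ℝ (v i) xbar w := by
        rw [← Finset.sum_sub_distrib]
        exact Finset.sum_congr rfl fun i _ => by rw [hc_def, sub_smul]
      have h2 : ∑ i, c i • fderiv ℝ (v i) xbar w = ∑ i ∈ S, c i • fderiv ℝ (v i) xbar w := by
        symm
        apply Finset.sum_subset (Finset.subset_univ S)
        intro i _ hiS
        rw [hcS i hiS, zero_smul]
      rw [← h2, ← h1]
      abel
    have heq : ⟪w, HessApp (fun y => φ y + ∑ i, mu i * q i y) xbar w⟫
        = ⟪w, HessApp (fun y => φ y + ∑ i, lam i * q i y) xbar w⟫ := by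
      have := hkey
      rw [← hdiff, inner_sub_right] at this
      linarith
    rw [heq]
    exact hbd w hwperp


end
end

section
/- (Lemma 2.3) Let f_0, f_1, …, f_q : ℝⁿ → ℝ be continuously differentiable on a neighborhood of x̄ ∈ ℝⁿ, with {∇f_1(x̄), …, ∇f_q(x̄)} linearly independent, and suppose ∇f_0(x) ∈ span{∇f_1(x), …, ∇f_q(x)} for all x in some neighborhood of x̄. Then there exist open convex neighborhoods X of x̄ in ℝⁿ and Y of (f_1(x̄), …, f_q(x̄)) in ℝ^q, and a continuously differentiable function g_0 : Y → ℝ, such that (f_1(x), …, f_q(x)) ∈ Y and f_0(x) = g_0(f_1(x), …, f_q(x)) for every x ∈ X; moreover, ∇f_0(x̄) = Σ_{i=1}^q λ_i ∇f_i(x̄), where λ_i := (∂g_0/∂y_i)(f_1(x̄), …, f_q(x̄)) for i = 1, …, q. -/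
set_option maxHeartbeats 2000000


open Filter Topology Metric Set
open scoped RealInnerProductSpace

noncomputable section

variable {n : ℕ} {ι : Type*} [Fintype ι] [DecidableEq ι]

/-- **Lemma 2.3.** If `∇f₀(x) ∈ span{∇f₁(x), …, ∇f_m(x)}` near `x̄` with
`{∇f_i(x̄)}` linearly independent, then locally `f₀ = g₀(f₁, …, f_m)` for a `C¹` function
`g₀`, and `∇f₀(x̄) = Σ_i λ_i ∇f_i(x̄)` with `λ_i = (∂g₀/∂y_i)(f₁(x̄), …, f_m(x̄))`. -/
theorem lemma23
    {n m : ℕ} (f0 : EuclideanSpace ℝ (Fin n) → ℝ)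
    (f : Fin m → EuclideanSpace ℝ (Fin n) → ℝ)
    (xbar : EuclideanSpace ℝ (Fin n))
    (hf0 : ∃ U ∈ 𝓝 xbar, ContDiffOn ℝ 1 f0 U)
    (hf : ∀ i, ∃ U ∈ 𝓝 xbar, ContDiffOn ℝ 1 (f i) U)
    (hli : LinearIndependent ℝ (fun i => gradient (f i) xbar))
    (hspan : ∀ᶠ x in 𝓝 xbar,
      gradient f0 x ∈ Submodule.span ℝ (Set.range fun i => gradient (f i) x)) :
    ∃ X : Set (EuclideanSpace ℝ (Fin n)), ∃ Y : Set (EuclideanSpace ℝ (Fin m)),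
      IsOpen X ∧ Convex ℝ X ∧ xbar ∈ X ∧ IsOpen Y ∧ Convex ℝ Y ∧
      (show EuclideanSpace ℝ (Fin m) from WithLp.toLp 2 (fun i => f i xbar)) ∈ Y ∧
      ∃ g0 : EuclideanSpace ℝ (Fin m) → ℝ, ContDiffOn ℝ 1 g0 Y ∧
        (∀ x ∈ X, (show EuclideanSpace ℝ (Fin m) from WithLp.toLp 2 (fun i => f i x)) ∈ Y ∧
          f0 x = g0 (show EuclideanSpace ℝ (Fin m) from WithLp.toLp 2 (fun i => f i x))) ∧
        gradient f0 xbar =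
          ∑ i, (fderiv ℝ g0 (show EuclideanSpace ℝ (Fin m) from WithLp.toLp 2 (fun i => f i xbar))
              (EuclideanSpace.single i 1)) • gradient (f i) xbar := by
  classical
  -- inner product / gradient / fderiv dictionary
  have hgi : ∀ (φ : EuclideanSpace ℝ (Fin n) → ℝ) (x v : EuclideanSpace ℝ (Fin n)),
      ⟪gradient φ x, v⟫ = fderiv ℝ φ x v := by
    intro φ x v
    unfold gradient
    exact InnerProductSpace.toDual_symm_apply
  -- smoothness neighborhoods
  obtain ⟨U0', hU0n, hU0'⟩ := hf0
  choose Uf hUfn hUf using hf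
  set UF : Set (EuclideanSpace ℝ (Fin n)) := interior (⋂ i, Uf i) with hUFdef
  have hUFo : IsOpen UF := isOpen_interior
  have hxUF : xbar ∈ UF := mem_interior_iff_mem_nhds.mpr (Filter.iInter_mem.mpr hUfn)
  have hfC : ∀ i, ContDiffOn ℝ 1 (f i) UF :=
    fun i => (hUf i).mono (interior_subset.trans (Set.iInter_subset _ i))
  set Us : Set (EuclideanSpace ℝ (Fin n)) :=
    {x | gradient f0 x ∈ Submodule.span ℝ (Set.range fun i => gradient (f i) x)} with hUsdef
  have hUs : Us ∈ 𝓝 xbar := hspan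
  -- the map F = (f₁, …, f_m) and its derivative
  set F : EuclideanSpace ℝ (Fin n) → EuclideanSpace ℝ (Fin m) :=
    fun x => (show EuclideanSpace ℝ (Fin m) from WithLp.toLp 2 (fun i => f i x)) with hFdef
  have hFC : ContDiffOn ℝ 1 F UF := (contDiffOn_piLp 2).mpr fun i => hfC i
  have hfd : ∀ x ∈ UF, ∀ i, DifferentiableAt ℝ (f i) x := fun x hx i =>
    ((hfC i).differentiableOn one_ne_zero).differentiableAt (hUFo.mem_nhds hx)
  set DF : EuclideanSpace ℝ (Fin n) →
      (EuclideanSpace ℝ (Fin n) →L[ℝ] EuclideanSpace ℝ (Fin m)) :=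
    fun x => ((PiLp.continuousLinearEquiv 2 ℝ (fun _ : Fin m => ℝ)).symm :
        (Fin m → ℝ) →L[ℝ] EuclideanSpace ℝ (Fin m)).comp
      (ContinuousLinearMap.pi fun i => fderiv ℝ (f i) x) with hDFdef
  have hDFapp : ∀ x v i, DF x v i = fderiv ℝ (f i) x v := fun x v i => rfl
  have hDFd : ∀ x ∈ UF, HasFDerivAt F (DF x) x := by
    intro x hx
    exact ((PiLp.continuousLinearEquiv 2 ℝ
        (fun _ : Fin m => ℝ)).symm.toContinuousLinearMap.hasFDerivAt).comp x
      (hasFDerivAt_pi.mpr fun i => (hfd x hx i).hasFDerivAt)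
  have hDFcont : ContinuousOn DF UF := by
    have h1 : ContinuousOn (fderiv ℝ F) UF := hFC.continuousOn_fderiv_of_isOpen hUFo le_rfl
    exact h1.congr fun x hx => ((hDFd x hx).fderiv).symm ▸ rfl
  -- the complementary subspace and projection
  set K : Submodule ℝ (EuclideanSpace ℝ (Fin n)) :=
    (Submodule.span ℝ (Set.range fun i => gradient (f i) xbar))ᗮ with hKdef
  set P : EuclideanSpace ℝ (Fin n) →L[ℝ] K := K.orthogonalProjectionOnto with hPdef
  set Φ : EuclideanSpace ℝ (Fin n) → EuclideanSpace ℝ (Fin m) × K :=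
    fun x => (F x, P (x - xbar)) with hΦdef
  set Φ' : EuclideanSpace ℝ (Fin n) →
      (EuclideanSpace ℝ (Fin n) →L[ℝ] EuclideanSpace ℝ (Fin m) × K) :=
    fun x => (DF x).prod P with hΦ'def
  have hΦd : ∀ x ∈ UF, HasFDerivAt Φ (Φ' x) x := by
    intro x hx
    refine (hDFd x hx).prodMk ?_
    have h1 := P.hasFDerivAt.comp x ((hasFDerivAt_id x).sub_const xbar)
    have h2 : P.comp (ContinuousLinearMap.id ℝ (EuclideanSpace ℝ (Fin n))) = P :=
      ContinuousLinearMap.comp_id P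
    rw [h2] at h1
    exact h1
  have hΦC : ContDiffOn ℝ 1 Φ UF :=
    hFC.prodMk ((P.contDiff.comp (contDiff_id.sub contDiff_const)).contDiffOn)
  -- injectivity of Φ'(x̄)
  have hinj : Function.Injective (Φ' xbar) := by
    intro v₁ v₂ hv
    have hv0 : Φ' xbar (v₁ - v₂) = 0 := by rw [map_sub, hv, sub_self]
    set v := v₁ - v₂ with hvdef
    have hDF0 : DF xbar v = 0 := congrArg Prod.fst hv0
    have hP0 : P v = 0 := congrArg Prod.snd hv0
    have hvK : v ∈ K := by
      rw [hKdef, Submodule.mem_orthogonal]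
      intro u hu
      obtain ⟨c, hc⟩ := (Submodule.mem_span_range_iff_exists_fun ℝ).mp hu
      rw [← hc, sum_inner]
      refine Finset.sum_eq_zero fun i _ => ?_
      rw [real_inner_smul_left, hgi, ← hDFapp xbar v i, hDF0]
      simp
    have hveq : P v = (⟨v, hvK⟩ : K) := Submodule.orthogonalProjectionOnto_mem_subspace_eq_self (⟨v, hvK⟩ : K)
    have : v = 0 := by
      have := hveq.symm.trans hP0
      exact congrArg Subtype.val this
    exact sub_eq_zero.mp this
  -- dimensions agree
  have hdim : Module.finrank ℝ (EuclideanSpace ℝ (Fin n)) =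
      Module.finrank ℝ (EuclideanSpace ℝ (Fin m) × K) := by
    have h1 : Module.finrank ℝ
        (Submodule.span ℝ (Set.range fun i => gradient (f i) xbar)) = m := by
      rw [finrank_span_eq_card hli, Fintype.card_fin]
    have h2 := Submodule.finrank_add_finrank_orthogonal
      (K := Submodule.span ℝ (Set.range fun i => gradient (f i) xbar))
    rw [h1, finrank_euclideanSpace_fin] at h2
    rw [Module.finrank_prod, finrank_euclideanSpace_fin, finrank_euclideanSpace_fin]
    have h3 : Module.finrank ℝ K = Module.finrank ℝ
        ((Submodule.span ℝ (Set.range fun i => gradient (f i) xbar))ᗮ) := rfl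
    rw [h3]
    omega
  -- the linear isomorphism A₀ and the local diffeomorphism
  set A₀ : EuclideanSpace ℝ (Fin n) ≃L[ℝ] EuclideanSpace ℝ (Fin m) × K :=
    (LinearMap.linearEquivOfInjective ((Φ' xbar) :
      EuclideanSpace ℝ (Fin n) →ₗ[ℝ] EuclideanSpace ℝ (Fin m) × K)
        hinj hdim).toContinuousLinearEquiv with hA₀def
  have hA₀coe : (A₀ : EuclideanSpace ℝ (Fin n) →L[ℝ] EuclideanSpace ℝ (Fin m) × K)
      = Φ' xbar := by
    refine ContinuousLinearMap.ext fun v => ?_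
    show (LinearMap.linearEquivOfInjective _ hinj hdim).toContinuousLinearEquiv v = _
    rw [LinearEquiv.coe_toContinuousLinearEquiv']
    exact LinearMap.linearEquivOfInjective_apply hinj hdim v
  have hΦCx : ContDiffAt ℝ 1 Φ xbar := hΦC.contDiffAt (hUFo.mem_nhds hxUF)
  have hΦdx : HasFDerivAt Φ
      (A₀ : EuclideanSpace ℝ (Fin n) →L[ℝ] EuclideanSpace ℝ (Fin m) × K) xbar := by
    rw [hA₀coe]; exact hΦd xbar hxUF
  set e := hΦCx.toOpenPartialHomeomorph Φ hΦdx one_ne_zero with hedef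
  have hecoe : ⇑e = Φ := ContDiffAt.toOpenPartialHomeomorph_coe _ _ _
  have hxe : xbar ∈ e.source := hΦCx.mem_toOpenPartialHomeomorph_source hΦdx one_ne_zero
  set pbar : EuclideanSpace ℝ (Fin m) × K := Φ xbar with hpbardef
  have hpbar2 : pbar = (F xbar, (0 : K)) := by
    show (F xbar, P (xbar - xbar)) = _
    rw [sub_self, map_zero]
  have hpbart : pbar ∈ e.target := hΦCx.image_mem_toOpenPartialHomeomorph_target hΦdx one_ne_zero
  have hsymmx : e.symm pbar = xbar := by
    have := e.left_inv hxe
    rwa [hecoe] at this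
  -- the function h = f₀ ∘ Φ⁻¹, C¹ near p̄
  set h : EuclideanSpace ℝ (Fin m) × K → ℝ := fun p => f0 (e.symm p) with hhdef
  have hsymmC : ContDiffAt ℝ 1 e.symm pbar := hΦCx.to_localInverse hΦdx one_ne_zero
  have hhC : ContDiffAt ℝ 1 h pbar := by
    have hf0x : ContDiffAt ℝ 1 f0 (e.symm pbar) := by
      rw [hsymmx]; exact hU0'.contDiffAt hU0n
    exact hf0x.comp pbar hsymmC
  obtain ⟨N₀, hN₀, hhN₀⟩ := hhC.contDiffOn le_rfl (by simp)
  set N : Set (EuclideanSpace ℝ (Fin m) × K) := interior N₀ with hNdef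
  have hNo : IsOpen N := isOpen_interior
  have hpN : pbar ∈ N := mem_interior_iff_mem_nhds.mpr hN₀
  have hhN : ContDiffOn ℝ 1 h N := hhN₀.mono interior_subset
  -- invertibility of Φ'(x) near x̄
  set T : EuclideanSpace ℝ (Fin n) →
      (EuclideanSpace ℝ (Fin n) →L[ℝ] EuclideanSpace ℝ (Fin n)) :=
    fun x => (A₀.symm : EuclideanSpace ℝ (Fin m) × K →L[ℝ]
        EuclideanSpace ℝ (Fin n)).comp (Φ' x) with hTdef
  have hT1unit : IsUnit (T xbar) := by
    have : T xbar = 1 := by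
      refine ContinuousLinearMap.ext fun v => ?_
      show A₀.symm (Φ' xbar v) = v
      rw [← hA₀coe]
      exact A₀.symm_apply_apply v
    rw [this]; exact isUnit_one
  have hΦ'eq : ∀ x, Φ' x
      = (ContinuousLinearMap.inl ℝ (EuclideanSpace ℝ (Fin m)) K).comp (DF x)
        + (ContinuousLinearMap.inr ℝ (EuclideanSpace ℝ (Fin m)) K).comp P := by
    intro x
    refine ContinuousLinearMap.ext fun v => ?_
    simp [hΦ'def, Prod.ext_iff]
  have hTcont : ContinuousAt T xbar := by
    have c1 : ContinuousOn (fun x =>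
        ((ContinuousLinearMap.compL ℝ (EuclideanSpace ℝ (Fin n)) (EuclideanSpace ℝ (Fin m))
          (EuclideanSpace ℝ (Fin m) × K))
          (ContinuousLinearMap.inl ℝ (EuclideanSpace ℝ (Fin m)) K)) (DF x)) UF :=
      (ContinuousLinearMap.continuous _).comp_continuousOn hDFcont
    have c2 : ContinuousOn (fun x =>
        ((ContinuousLinearMap.compL ℝ (EuclideanSpace ℝ (Fin n)) (EuclideanSpace ℝ (Fin m))
          (EuclideanSpace ℝ (Fin m) × K))
          (ContinuousLinearMap.inl ℝ (EuclideanSpace ℝ (Fin m)) K)) (DF x)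
        + (ContinuousLinearMap.inr ℝ (EuclideanSpace ℝ (Fin m)) K).comp P) UF :=
      c1.add continuousOn_const
    have c3 : ContinuousOn (fun x =>
        ((ContinuousLinearMap.compL ℝ (EuclideanSpace ℝ (Fin n))
          (EuclideanSpace ℝ (Fin m) × K) (EuclideanSpace ℝ (Fin n)))
          (A₀.symm : EuclideanSpace ℝ (Fin m) × K →L[ℝ] EuclideanSpace ℝ (Fin n)))
          (((ContinuousLinearMap.compL ℝ (EuclideanSpace ℝ (Fin n)) (EuclideanSpace ℝ (Fin m))
            (EuclideanSpace ℝ (Fin m) × K))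
            (ContinuousLinearMap.inl ℝ (EuclideanSpace ℝ (Fin m)) K)) (DF x)
          + (ContinuousLinearMap.inr ℝ (EuclideanSpace ℝ (Fin m)) K).comp P)) UF :=
      (ContinuousLinearMap.continuous _).comp_continuousOn c2
    have c4 : ContinuousOn T UF := by
      refine c3.congr fun x hx => ?_
      show T x = _
      rw [hTdef]
      simp only [ContinuousLinearMap.compL_apply]
      rw [hΦ'eq x]
    exact c4.continuousAt (hUFo.mem_nhds hxUF)
  have hUnitmem : {x | IsUnit (T x)} ∈ 𝓝 xbar :=
    hTcont.preimage_mem_nhds (Units.isOpen.mem_nhds hT1unit)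
  -- the good neighborhoods
  set W : Set (EuclideanSpace ℝ (Fin n)) :=
    e.source ∩ UF ∩ Us ∩ {x | IsUnit (T x)} ∩ Φ ⁻¹' N with hWdef
  have hWnb : W ∈ 𝓝 xbar := by
    refine Filter.inter_mem (Filter.inter_mem (Filter.inter_mem (Filter.inter_mem
      (e.open_source.mem_nhds hxe) (hUFo.mem_nhds hxUF)) hUs) hUnitmem) ?_
    exact hΦCx.continuousAt.preimage_mem_nhds (hNo.mem_nhds hpN)
  set V : Set (EuclideanSpace ℝ (Fin n)) := interior W with hVdef
  have hVo : IsOpen V := isOpen_interior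
  have hxV : xbar ∈ V := mem_interior_iff_mem_nhds.mpr hWnb
  set SV : Set (EuclideanSpace ℝ (Fin m) × K) := e.target ∩ e.symm ⁻¹' V with hSVdef
  have hSVo : IsOpen SV := e.isOpen_inter_preimage_symm hVo
  have hpSV : pbar ∈ SV := ⟨hpbart, by rw [Set.mem_preimage, hsymmx]; exact hxV⟩
  have hmain : ∀ p ∈ SV, Φ (e.symm p) = p ∧ e.symm p ∈ W := by
    intro p hp
    constructor
    · have := e.right_inv hp.1
      rwa [hecoe] at this
    · exact interior_subset hp.2
  have hSVN : ∀ p ∈ SV, p ∈ N := by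
    intro p hp
    obtain ⟨hpx, hxW⟩ := hmain p hp
    have := hxW.2
    rwa [Set.mem_preimage, hpx] at this
  have hdiffh : ∀ p ∈ SV, DifferentiableAt ℝ h p := fun p hp =>
    (hhN.differentiableOn one_ne_zero).differentiableAt (hNo.mem_nhds (hSVN p hp))
  -- the chain rule along Φ
  have hchain : ∀ p ∈ SV,
      HasFDerivAt f0 ((fderiv ℝ h p).comp (Φ' (e.symm p))) (e.symm p) := by
    intro p hp
    obtain ⟨hpx, hxW⟩ := hmain p hp
    have hxUF' : e.symm p ∈ UF := hxW.1.1.1.2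
    have hhd : HasFDerivAt h (fderiv ℝ h p) (Φ (e.symm p)) := by
      rw [hpx]; exact (hdiffh p hp).hasFDerivAt
    have hcomp := hhd.comp (e.symm p) (hΦd (e.symm p) hxUF')
    refine hcomp.congr_of_eventuallyEq ?_
    filter_upwards [e.open_source.mem_nhds hxW.1.1.1.1] with y hy
    show f0 y = h (Φ y)
    have := e.left_inv hy
    rw [hecoe] at this
    show f0 y = f0 (e.symm (Φ y))
    rw [this]
  -- key vanishing of the vertical derivatives of h
  have hkey : ∀ p ∈ SV, ∀ w : K, fderiv ℝ h p ((0 : EuclideanSpace ℝ (Fin m)), w) = 0 := by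
    intro p hp w
    obtain ⟨hpx, hxW⟩ := hmain p hp
    have hxUF' : e.symm p ∈ UF := hxW.1.1.1.2
    have hUnit : IsUnit (T (e.symm p)) := hxW.1.2
    set u := hUnit.unit with hudef
    set v := (↑u⁻¹ : EuclideanSpace ℝ (Fin n) →L[ℝ] EuclideanSpace ℝ (Fin n))
      ((A₀.symm : EuclideanSpace ℝ (Fin m) × K →L[ℝ] EuclideanSpace ℝ (Fin n))
        ((0 : EuclideanSpace ℝ (Fin m)), w)) with hvdef
    have hΦ'v : Φ' (e.symm p) v = ((0 : EuclideanSpace ℝ (Fin m)), w) := by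
      have h1 : ∀ z, (A₀ : EuclideanSpace ℝ (Fin n) →L[ℝ] EuclideanSpace ℝ (Fin m) × K)
          (T (e.symm p) z) = Φ' (e.symm p) z := fun z => by
        simp [hTdef]
      have h2 : T (e.symm p) v = (A₀.symm : EuclideanSpace ℝ (Fin m) × K →L[ℝ]
          EuclideanSpace ℝ (Fin n)) ((0 : EuclideanSpace ℝ (Fin m)), w) := by
        have : T (e.symm p) v = ((T (e.symm p)) * ↑u⁻¹)
            ((A₀.symm : EuclideanSpace ℝ (Fin m) × K →L[ℝ] EuclideanSpace ℝ (Fin n))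
              ((0 : EuclideanSpace ℝ (Fin m)), w)) := rfl
        rw [this, ← hUnit.unit_spec, Units.mul_inv]
        rfl
      have h3 := h1 v
      rw [h2] at h3
      rw [← h3]
      exact A₀.apply_symm_apply _
    have hf0d := hchain p hp
    have hcv : fderiv ℝ h p ((0 : EuclideanSpace ℝ (Fin m)), w)
        = fderiv ℝ f0 (e.symm p) v := by
      rw [hf0d.fderiv, ContinuousLinearMap.comp_apply, hΦ'v]
    have hxUs : e.symm p ∈ Us := hxW.1.1.2
    obtain ⟨c, hc⟩ := (Submodule.mem_span_range_iff_exists_fun ℝ).mp hxUs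
    rw [hcv, ← hgi f0 (e.symm p) v, ← hc, sum_inner]
    refine Finset.sum_eq_zero fun i _ => ?_
    rw [real_inner_smul_left, hgi, ← hDFapp (e.symm p) v i]
    have hDF0 : DF (e.symm p) v = 0 := congrArg Prod.fst hΦ'v
    rw [hDF0]
    simp
  -- vanishing derivative of the vertical slices
  have hkey2 : ∀ p ∈ SV, HasFDerivAt (fun z : K => h (p.1, z)) (0 : K →L[ℝ] ℝ) p.2 := by
    intro p hp
    have hmk : HasFDerivAt (fun z : K => ((p.1, z) : EuclideanSpace ℝ (Fin m) × K))
        ((0 : K →L[ℝ] EuclideanSpace ℝ (Fin m)).prod (ContinuousLinearMap.id ℝ K)) p.2 :=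
      (hasFDerivAt_const p.1 p.2).prodMk (hasFDerivAt_id p.2)
    have hhd : HasFDerivAt h (fderiv ℝ h p) ((p.1, p.2) : EuclideanSpace ℝ (Fin m) × K) := by
      rw [Prod.mk.eta]; exact (hdiffh p hp).hasFDerivAt
    have hcomp := hhd.comp p.2 hmk
    have hzero : (fderiv ℝ h p).comp
        ((0 : K →L[ℝ] EuclideanSpace ℝ (Fin m)).prod (ContinuousLinearMap.id ℝ K)) = 0 := by
      refine ContinuousLinearMap.ext fun w => ?_
      show fderiv ℝ h p ((0 : K →L[ℝ] EuclideanSpace ℝ (Fin m)) w, w) = 0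
      rw [ContinuousLinearMap.zero_apply]
      exact hkey p hp w
    rw [hzero] at hcomp
    exact hcomp
  -- product neighborhoods
  obtain ⟨δ, hδpos, hδ⟩ := Metric.isOpen_iff.mp hSVo pbar hpSV
  set Y : Set (EuclideanSpace ℝ (Fin m)) := ball (F xbar) δ with hYdef
  set Z : Set K := ball (0 : K) δ with hZdef
  have hYZ : Y ×ˢ Z ⊆ SV := by
    intro pz hpz
    apply hδ
    rw [hpbar2, ← ball_prod_same]
    exact hpz
  set g0 : EuclideanSpace ℝ (Fin m) → ℝ := fun y => h (y, (0 : K)) with hg0def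
  have h0Z : (0 : K) ∈ Z := mem_ball_self hδpos
  have hconst : ∀ y ∈ Y, ∀ z ∈ Z, h (y, z) = h (y, (0 : K)) := by
    intro y hy z hz
    have hder : ∀ z' ∈ Z, HasFDerivWithinAt (fun z' : K => h (y, z'))
        ((fun _ => (0 : K →L[ℝ] ℝ)) z') Z z' :=
      fun z' hz' => (hkey2 (y, z') (hYZ ⟨hy, hz'⟩)).hasFDerivWithinAt
    have hb := (convex_ball (0 : K) δ).norm_image_sub_le_of_norm_hasFDerivWithin_le
      hder (fun z' _ => le_of_eq norm_zero) h0Z hz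
    have : ‖h (y, z) - h (y, (0 : K))‖ ≤ 0 := by simpa using hb
    have := le_antisymm this (norm_nonneg _)
    rwa [norm_sub_eq_zero_iff] at this
  have hXnb : V ∩ Φ ⁻¹' ball pbar δ ∈ 𝓝 xbar :=
    Filter.inter_mem (hVo.mem_nhds hxV)
      (hΦCx.continuousAt.preimage_mem_nhds (isOpen_ball.mem_nhds (mem_ball_self hδpos)))
  obtain ⟨r, hrpos, hr⟩ := Metric.mem_nhds_iff.mp hXnb
  set X : Set (EuclideanSpace ℝ (Fin n)) := ball xbar r with hXdef
  -- membership and factorization on X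
  have hXmain : ∀ x ∈ X, F x ∈ Y ∧ P (x - xbar) ∈ Z ∧ f0 x = g0 (F x) := by
    intro x hx
    have hx' := hr hx
    have hxV' : x ∈ V := hx'.1
    have hΦball : Φ x ∈ Y ×ˢ Z := by
      have := hx'.2
      rw [Set.mem_preimage, hpbar2, ← ball_prod_same] at this
      exact this
    have hFY : F x ∈ Y := hΦball.1
    have hPZ : P (x - xbar) ∈ Z := hΦball.2
    refine ⟨hFY, hPZ, ?_⟩
    have hxsrc : x ∈ e.source := (interior_subset hxV').1.1.1.1
    have h1 : f0 x = h (Φ x) := by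
      have := e.left_inv hxsrc
      rw [hecoe] at this
      show f0 x = f0 (e.symm (Φ x))
      rw [this]
    rw [h1]
    exact hconst (F x) hFY (P (x - xbar)) hPZ
  -- derivative of g0
  have hg0d : HasFDerivAt g0 ((fderiv ℝ h pbar).comp
      ((ContinuousLinearMap.id ℝ (EuclideanSpace ℝ (Fin m))).prod
        (0 : EuclideanSpace ℝ (Fin m) →L[ℝ] K))) (F xbar) := by
    have hmk : HasFDerivAt (fun y : EuclideanSpace ℝ (Fin m) =>
        ((y, (0 : K)) : EuclideanSpace ℝ (Fin m) × K))
        ((ContinuousLinearMap.id ℝ (EuclideanSpace ℝ (Fin m))).prod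
          (0 : EuclideanSpace ℝ (Fin m) →L[ℝ] K)) (F xbar) :=
      (hasFDerivAt_id (F xbar)).prodMk (hasFDerivAt_const (0 : K) (F xbar))
    have hhd : HasFDerivAt h (fderiv ℝ h pbar)
        ((F xbar, (0 : K)) : EuclideanSpace ℝ (Fin m) × K) := by
      rw [← hpbar2]; exact (hdiffh pbar hpSV).hasFDerivAt
    exact hhd.comp (F xbar) hmk
  -- decomposition along the standard basis
  have hdec : ∀ y : EuclideanSpace ℝ (Fin m),
      fderiv ℝ h pbar ((y, (0 : K)) : EuclideanSpace ℝ (Fin m) × K)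
        = ∑ i, y i * fderiv ℝ h pbar
          ((EuclideanSpace.single i (1 : ℝ), (0 : K)) : EuclideanSpace ℝ (Fin m) × K) := by
    intro y
    have hy : y = ∑ i, y i • EuclideanSpace.single i (1 : ℝ) := by
      have := ((EuclideanSpace.basisFun (Fin m) ℝ).sum_repr y).symm
      simpa [EuclideanSpace.basisFun_apply, EuclideanSpace.basisFun_repr] using this
    have hy2 : ((y, (0 : K)) : EuclideanSpace ℝ (Fin m) × K)
        = ∑ i, y i • ((EuclideanSpace.single i (1 : ℝ), (0 : K)) :
            EuclideanSpace ℝ (Fin m) × K) := by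
      rw [Prod.ext_iff]
      constructor
      · rw [Prod.fst_sum]
        simpa using hy
      · rw [Prod.snd_sum]
        simp
    rw [hy2, map_sum]
    refine Finset.sum_congr rfl fun i _ => ?_
    rw [map_smul]
    rfl
  -- conclusion
  refine ⟨X, Y, isOpen_ball, convex_ball _ _, mem_ball_self hrpos, isOpen_ball,
    convex_ball _ _, mem_ball_self hδpos, g0, ?_, ?_, ?_⟩
  · -- ContDiffOn g0 Y
    refine hhN.comp ((contDiff_id.prodMk contDiff_const).contDiffOn) ?_
    intro y hy
    exact hSVN _ (hYZ ⟨hy, h0Z⟩)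
  · -- factorization on X
    intro x hx
    obtain ⟨hFY, _, hfac⟩ := hXmain x hx
    exact ⟨hFY, hfac⟩
  · -- the multiplier formula
    apply ext_inner_right ℝ
    intro v
    rw [hgi f0 xbar v]
    have hf0d := hchain pbar hpSV
    rw [hsymmx] at hf0d
    rw [hf0d.fderiv, ContinuousLinearMap.comp_apply]
    have hsplit : (Φ' xbar) v
        = ((DF xbar v, (0 : K)) : EuclideanSpace ℝ (Fin m) × K)
          + (((0 : EuclideanSpace ℝ (Fin m)), P v) : EuclideanSpace ℝ (Fin m) × K) := by
      refine Prod.ext ?_ ?_ <;> simp [hΦ'def]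
    rw [hsplit, map_add, hkey pbar hpSV (P v), add_zero, hdec, sum_inner]
    refine Finset.sum_congr rfl fun i _ => ?_
    rw [real_inner_smul_left, hgi (f i) xbar v, ← hDFapp xbar v i, hg0d.fderiv]
    show DF xbar v i * fderiv ℝ h pbar (EuclideanSpace.single i (1 : ℝ), (0 : K))
      = fderiv ℝ h pbar ((EuclideanSpace.single i (1 : ℝ)), (0 : K)) * DF xbar v i
    ring

end
end

section
/- (Lemma 2.1(i)) Let MSCQ hold at x̄ ∈ Γ with some modulus. Then there exists a neighborhood V of x̄ such that for every x ∈ Γ ∩ V, every x* ∈ ℝⁿ with Λ(x, x*) ≠ ∅, and every λ ∈ Λ(x, x*): K(x, x*) = {v ∈ ℝⁿ : ⟨∇q_i(x), v⟩ = 0 for all i ∈ E ∪ I⁺(λ), and ⟨∇q_i(x), v⟩ ≤ 0 for all i ∈ I(x) ∖ I⁺(λ)}. -/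
open Filter Topology Metric Set
open scoped RealInnerProductSpace

noncomputable section

variable {n : ℕ} {ι : Type*} [Fintype ι] [DecidableEq ι]

open Asymptotics

lemma tendsto_ratio {n : ℕ} {f : EuclideanSpace ℝ (Fin n) → ℝ}
    {x v : EuclideanSpace ℝ (Fin n)} {t : ℕ → ℝ} {c : ℕ → EuclideanSpace ℝ (Fin n)}
    (hdf : DifferentiableAt ℝ f x) (ht0 : ∀ k, 0 < t k)
    (ht : Tendsto t atTop (𝓝 0)) (hc : Tendsto c atTop (𝓝 v)) :
    Tendsto (fun k => (f (x + t k • c k) - f x) / t k) atTop (𝓝 (fderiv ℝ f x v)) := by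
  set F := fderiv ℝ f x with hF
  have hlo : (fun h => f (x + h) - f x - F h) =o[𝓝 0] id :=
    hasFDerivAt_iff_isLittleO_nhds_zero.mp hdf.hasFDerivAt
  have hh : Tendsto (fun k => t k • c k) atTop (𝓝 0) := by
    have := ht.smul hc
    simpa using this
  have comp : (fun k => f (x + t k • c k) - f x - F (t k • c k)) =o[atTop]
      (fun k => t k • c k) := hlo.comp_tendsto hh
  have hbO : (fun k => t k • c k) =O[atTop] t := by
    rw [isBigO_iff]
    refine ⟨‖v‖ + 1, ?_⟩
    have : ∀ᶠ k in atTop, ‖c k‖ < ‖v‖ + 1 :=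
      (hc.norm).eventually_lt_const (lt_add_one ‖v‖)
    filter_upwards [this] with k hk
    rw [norm_smul]
    calc ‖t k‖ * ‖c k‖ ≤ ‖t k‖ * (‖v‖ + 1) :=
          mul_le_mul_of_nonneg_left hk.le (norm_nonneg _)
      _ = (‖v‖ + 1) * ‖t k‖ := mul_comm _ _
  have key : (fun k => f (x + t k • c k) - f x - F (t k • c k)) =o[atTop] t :=
    comp.trans_isBigO hbO
  have h0 : Tendsto (fun k => (f (x + t k • c k) - f x - F (t k • c k)) / t k) atTop (𝓝 0) := by
    rw [isLittleO_iff_tendsto'] at key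
    · exact key
    · filter_upwards with k hk; exact absurd hk (ht0 k).ne'
  have hFc : Tendsto (fun k => F (c k)) atTop (𝓝 (F v)) := (F.continuous.tendsto v).comp hc
  have heq : (fun k => (f (x + t k • c k) - f x) / t k) =
      fun k => (f (x + t k • c k) - f x - F (t k • c k)) / t k + F (c k) := by
    funext k
    have ht' : t k ≠ 0 := (ht0 k).ne'
    rw [F.map_smul]
    field_simp
    ring
  rw [heq]
  simpa using h0.add hFc

lemma bcone_fderiv_nonpos {n : ℕ} {f : EuclideanSpace ℝ (Fin n) → ℝ}
    {s : Set (EuclideanSpace ℝ (Fin n))} {x v : EuclideanSpace ℝ (Fin n)}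
    (hdf : DifferentiableAt ℝ f x) (hx0 : f x = 0) (hs : ∀ y ∈ s, f y ≤ 0)
    (hv : v ∈ BCone s x) : fderiv ℝ f x v ≤ 0 := by
  obtain ⟨t, c, ht0, ht, hc, hmem⟩ := hv
  refine le_of_tendsto (tendsto_ratio hdf ht0 ht hc) (Eventually.of_forall fun k => ?_)
  rw [hx0, sub_zero]
  exact div_nonpos_of_nonpos_of_nonneg (hs _ (hmem k)) (ht0 k).le

lemma bcone_fderiv_eq_zero {n : ℕ} {f : EuclideanSpace ℝ (Fin n) → ℝ}
    {s : Set (EuclideanSpace ℝ (Fin n))} {x v : EuclideanSpace ℝ (Fin n)}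
    (hdf : DifferentiableAt ℝ f x) (hx0 : f x = 0) (hs : ∀ y ∈ s, f y = 0)
    (hv : v ∈ BCone s x) : fderiv ℝ f x v = 0 := by
  have h1 := bcone_fderiv_nonpos hdf hx0 (fun y hy => (hs y hy).le) hv
  have h2 : fderiv ℝ (fun z => -(f z)) x v ≤ 0 :=
    bcone_fderiv_nonpos hdf.neg (by simp [hx0]) (fun y hy => by simp [hs y hy]) hv
  rw [fderiv_fun_neg] at h2
  simp only [ContinuousLinearMap.neg_apply, neg_nonpos] at h2
  linarith

lemma mem_bcone_of_linearized
    (E I : Finset ι) (hdisj : Disjoint E I) (hunion : E ∪ I = Finset.univ)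
    (q : ι → EuclideanSpace ℝ (Fin n) → ℝ) (hq : ∀ i, ContDiff ℝ 2 (q i))
    {x v : EuclideanSpace ℝ (Fin n)} (hx : x ∈ Feas E I q)
    {κ : ℝ} (hκ : 0 < κ) {U : Set (EuclideanSpace ℝ (Fin n))} (hUx : U ∈ 𝓝 x)
    (hUprop : ∀ u ∈ U, Metric.infDist u (Feas E I q) ≤
      κ * Metric.infDist (show EuclideanSpace ℝ ι from WithLp.toLp 2 (fun i => q i u)) (Theta E I))
    (hvE : ∀ i ∈ E, fderiv ℝ (q i) x v = 0)
    (hvI : ∀ i ∈ ActiveI I q x, fderiv ℝ (q i) x v ≤ 0) :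
    v ∈ BCone (Feas E I q) x := by
  classical
  set t0 : ℕ → ℝ := fun k => 1 / (k + 1) with ht0def
  have ht0pos : ∀ k, 0 < t0 k := fun k => by positivity
  have ht0 : Tendsto t0 atTop (𝓝 0) := tendsto_one_div_add_atTop_nhds_zero_nat
  set g : ι → ℝ → ℝ := fun i s => q i (x + s • v) with hgdef
  have hgderiv : ∀ i, HasDerivAt (g i) (fderiv ℝ (q i) x v) 0 := by
    intro i
    have hline : HasDerivAt (fun s : ℝ => x + s • v) v 0 := by
      simpa using ((hasDerivAt_id (0:ℝ)).smul_const v).const_add x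
    have hf : HasFDerivAt (q i) (fderiv ℝ (q i) x) (x + (0:ℝ) • v) := by
      simpa using ((hq i).differentiable two_ne_zero).differentiableAt.hasFDerivAt
    exact hf.comp_hasDerivAt 0 hline
  have hgcont : ∀ i, Tendsto (fun k => g i (t0 k)) atTop (𝓝 (q i x)) := by
    intro i
    have := ((hgderiv i).continuousAt).tendsto.comp ht0
    simpa [hgdef, Function.comp_def] using this
  have hslope : ∀ i, Tendsto (fun k => (g i (t0 k) - q i x) / t0 k) atTop
      (𝓝 (fderiv ℝ (q i) x v)) := by
    intro i
    have h1 : Tendsto (slope (g i) 0) (𝓝[≠] (0:ℝ)) (𝓝 (fderiv ℝ (q i) x v)) :=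
      hasDerivAt_iff_tendsto_slope.mp (hgderiv i)
    have h2 : Tendsto t0 atTop (𝓝[≠] (0:ℝ)) := by
      refine tendsto_nhdsWithin_iff.mpr ⟨ht0, ?_⟩
      filter_upwards with k; exact (ht0pos k).ne'
    refine Tendsto.congr (fun k => ?_) (h1.comp h2)
    have hg0 : g i 0 = q i x := by simp [hgdef]
    simp [Function.comp, slope_def_field, hg0]
  set w : ℕ → EuclideanSpace ℝ ι := fun k => WithLp.toLp 2 (fun i =>
    if i ∈ I then max (g i (t0 k)) 0 else g i (t0 k)) with hwdef
  have hinf : ∀ k, Metric.infDist (show EuclideanSpace ℝ ι from WithLp.toLp 2 (fun i => q i (x + t0 k • v)))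
      (Theta E I) ≤ ‖w k‖ := by
    intro k
    set p : EuclideanSpace ℝ ι := WithLp.toLp 2 (fun i => if i ∈ I then min (g i (t0 k)) 0 else 0) with hpdef
    have hp : p ∈ Theta E I := by
      constructor
      · intro i hi
        have : i ∉ I := fun hiI => (Finset.disjoint_left.mp hdisj hi) hiI
        simp [hpdef, this]
      · intro i hi; simp [hpdef, hi, min_le_right]
    refine (Metric.infDist_le_dist_of_mem hp).trans (le_of_eq ?_)
    rw [dist_eq_norm]
    congr 1
    ext i
    by_cases hiI : i ∈ I
    · simp only [hpdef, hwdef, hgdef, hiI, if_true]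
      simp [max_def, min_def]
      split_ifs <;> ring
    · simp [hpdef, hwdef, hgdef, hiI]
  have hcoord : ∀ i, Tendsto (fun k => (t0 k)⁻¹ * w k i) atTop (𝓝 0) := by
    intro i
    by_cases hiI : i ∈ I
    · by_cases hact : q i x = 0
      · have hd : fderiv ℝ (q i) x v ≤ 0 := hvI i (Finset.mem_filter.mpr ⟨hiI, hact⟩)
        have h1 : Tendsto (fun k => g i (t0 k) / t0 k) atTop (𝓝 (fderiv ℝ (q i) x v)) := by
          have := hslope i
          simpa [hact] using this
        have h2 : Tendsto (fun k => max (g i (t0 k) / t0 k) 0) atTop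
            (𝓝 (max (fderiv ℝ (q i) x v) 0)) := h1.max tendsto_const_nhds
        rw [max_eq_right hd] at h2
        refine h2.congr fun k => ?_
        rw [hwdef]
        simp only [hiI, if_true]
        rw [div_eq_inv_mul, mul_max_of_nonneg _ _ (inv_nonneg.mpr (ht0pos k).le), mul_zero]
      · have hneg : q i x < 0 := lt_of_le_of_ne (hx.2 i hiI) hact
        have hev : ∀ᶠ k in atTop, g i (t0 k) < 0 := (hgcont i).eventually_lt_const hneg
        refine Tendsto.congr' ?_ tendsto_const_nhds
        filter_upwards [hev] with k hk
        rw [hwdef]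
        simp [hiI, max_eq_right hk.le]
    · have hiE : i ∈ E := by
        have := Finset.mem_univ i
        rw [← hunion, Finset.mem_union] at this
        tauto
      have hq0 : q i x = 0 := hx.1 i hiE
      have h1 : Tendsto (fun k => g i (t0 k) / t0 k) atTop (𝓝 (fderiv ℝ (q i) x v)) := by
        have := hslope i; simpa [hq0] using this
      rw [hvE i hiE] at h1
      refine h1.congr fun k => ?_
      rw [hwdef]; simp [hiI, div_eq_inv_mul]
  have hwr : Tendsto (fun k => (t0 k)⁻¹ • w k) atTop (𝓝 0) := by
    set e := (PiLp.continuousLinearEquiv 2 ℝ (fun _ : ι => ℝ)) with hedef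
    have hW : Tendsto (fun k => (fun i => (t0 k)⁻¹ * w k i : ι → ℝ)) atTop (𝓝 0) := by
      rw [tendsto_pi_nhds]
      intro i
      simpa using hcoord i
    have := (e.symm.continuous.tendsto 0).comp hW
    rw [map_zero] at this
    exact this
  have hratio : Tendsto (fun k => ‖w k‖ / t0 k) atTop (𝓝 0) := by
    have := hwr.norm
    rw [norm_zero] at this
    refine this.congr fun k => ?_
    rw [norm_smul, norm_inv, Real.norm_eq_abs, abs_of_pos (ht0pos k), inv_mul_eq_div]
  have hxU : Tendsto (fun k => x + t0 k • v) atTop (𝓝 x) := by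
    have : Tendsto (fun k => t0 k • v) atTop (𝓝 ((0:ℝ) • v)) := ht0.smul_const v
    rw [zero_smul] at this
    simpa using (tendsto_const_nhds (x := x)).add this
  obtain ⟨N, hN⟩ := (eventually_atTop.mp (hxU.eventually_mem hUx))
  have hchoice : ∀ k : ℕ, ∃ y ∈ Feas E I q,
      dist (x + t0 (k + N) • v) y < κ * ‖w (k + N)‖ + (t0 (k + N))^2 := by
    intro k
    have hmem : x + t0 (k + N) • v ∈ U := hN (k + N) (Nat.le_add_left N k)
    have h1 : Metric.infDist (x + t0 (k + N) • v) (Feas E I q) ≤ κ * ‖w (k + N)‖ :=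
      (hUprop _ hmem).trans (mul_le_mul_of_nonneg_left (hinf (k + N)) hκ.le)
    have h2 : κ * ‖w (k + N)‖ < κ * ‖w (k + N)‖ + (t0 (k + N))^2 := by
      have := ht0pos (k + N); nlinarith
    exact (Metric.infDist_lt_iff ⟨x, hx⟩).mp (lt_of_le_of_lt h1 h2)
  choose y hyF hyd using hchoice
  refine ⟨fun k => t0 (k + N), fun k => (t0 (k + N))⁻¹ • (y k - x), fun k => ht0pos _, ?_, ?_, ?_⟩
  · exact ht0.comp (tendsto_add_atTop_nat N)
  · rw [tendsto_iff_norm_sub_tendsto_zero]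
    have hb : Tendsto (fun k => κ * (‖w (k + N)‖ / t0 (k + N)) + t0 (k + N)) atTop (𝓝 0) := by
      have h1 : Tendsto (fun k => ‖w (k + N)‖ / t0 (k + N)) atTop (𝓝 0) :=
        hratio.comp (tendsto_add_atTop_nat N)
      have h2 : Tendsto (fun k => t0 (k + N)) atTop (𝓝 0) := ht0.comp (tendsto_add_atTop_nat N)
      simpa using (h1.const_mul κ).add h2
    refine squeeze_zero (fun k => norm_nonneg _) (fun k => ?_) hb
    have htk := ht0pos (k + N)
    have hnorm : ‖(t0 (k + N))⁻¹ • (y k - x) - v‖ = ‖y k - (x + t0 (k + N) • v)‖ / t0 (k + N) := by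
      rw [show (t0 (k + N))⁻¹ • (y k - x) - v = (t0 (k + N))⁻¹ • (y k - (x + t0 (k + N) • v)) by
        rw [smul_sub, smul_sub, smul_add, smul_smul, inv_mul_cancel₀ htk.ne', one_smul]
        abel]
      rw [norm_smul, norm_inv, Real.norm_eq_abs, abs_of_pos htk, inv_mul_eq_div]
    rw [hnorm]
    have hle : ‖y k - (x + t0 (k + N) • v)‖ ≤ κ * ‖w (k + N)‖ + (t0 (k + N))^2 := by
      have := (hyd k).le
      rwa [dist_comm, dist_eq_norm] at this
    calc ‖y k - (x + t0 (k + N) • v)‖ / t0 (k + N)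
        ≤ (κ * ‖w (k + N)‖ + (t0 (k + N))^2) / t0 (k + N) := by gcongr
      _ = κ * (‖w (k + N)‖ / t0 (k + N)) + t0 (k + N) := by
          field_simp
  · intro k
    have htk := ht0pos (k + N)
    rw [smul_smul, mul_inv_cancel₀ htk.ne', one_smul]
    simpa using hyF k

/-- **Lemma 2.1(i).** Under MSCQ at `x̄ ∈ Γ`, for `x ∈ Γ` near `x̄`, any `x*` with
`Λ(x, x*) ≠ ∅` and any `λ ∈ Λ(x, x*)`, the critical cone `K(x,x*)` is described by
`⟨∇q_i(x), v⟩ = 0` for `i ∈ E ∪ I⁺(λ)` and `⟨∇q_i(x), v⟩ ≤ 0` for `i ∈ I(x) ∖ I⁺(λ)`. -/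
theorem critical_cone_description
    {n : ℕ} {ι : Type*} [Fintype ι] [DecidableEq ι] [Nonempty ι]
    (E I : Finset ι) (hdisj : Disjoint E I) (hunion : E ∪ I = Finset.univ)
    (q : ι → EuclideanSpace ℝ (Fin n) → ℝ) (hq : ∀ i, ContDiff ℝ 2 (q i))
    (xbar : EuclideanSpace ℝ (Fin n)) (hfeas : xbar ∈ Feas E I q)
    (hmscq : ∃ κ > (0:ℝ), MSCQat E I q xbar κ) :
    ∃ V ∈ 𝓝 xbar, ∀ x ∈ Feas E I q ∩ V, ∀ xs : EuclideanSpace ℝ (Fin n),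
      (Mult I q x xs).Nonempty → ∀ lam ∈ Mult I q x xs,
        Crit E I q x xs =
          {v : EuclideanSpace ℝ (Fin n) |
            (∀ i ∈ E ∪ IplusF I lam, ⟪gradient (q i) x, v⟫ = 0) ∧
            ∀ i ∈ ActiveI I q x \ IplusF I lam, ⟪gradient (q i) x, v⟫ ≤ 0} := by
  classical
  obtain ⟨κ, hκ, U, hU, hUprop⟩ := hmscq
  refine ⟨interior U, isOpen_interior.mem_nhds (mem_interior_iff_mem_nhds.mpr hU), ?_⟩
  rintro x ⟨hxF, hxV⟩ xs - lam hlam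
  have hUx : U ∈ 𝓝 x := mem_nhds_iff.mpr ⟨interior U, interior_subset, isOpen_interior, hxV⟩
  have hdiff : ∀ i, DifferentiableAt ℝ (q i) x :=
    fun i => ((hq i).differentiable two_ne_zero).differentiableAt
  have hg : ∀ i (v : EuclideanSpace ℝ (Fin n)), ⟪gradient (q i) x, v⟫ = fderiv ℝ (q i) x v := by
    intro i v
    rw [gradient]
    exact InnerProductSpace.toDual_symm_apply
  have hsum : ∀ v : EuclideanSpace ℝ (Fin n), ⟪xs, v⟫ = ∑ i, lam i * fderiv ℝ (q i) x v := by
    intro v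
    rw [← hlam.1, sum_inner]
    exact Finset.sum_congr rfl fun i _ => by rw [real_inner_smul_left, hg]
  have husplit : ∀ F : ι → ℝ, ∑ i, F i = ∑ i ∈ E, F i + ∑ i ∈ I, F i := by
    intro F
    rw [← Finset.sum_union hdisj, hunion]
  have hIsub : IplusF I lam ⊆ ActiveI I q x := by
    intro i hi
    rw [IplusF, Finset.mem_filter] at hi
    rw [ActiveI, Finset.mem_filter]
    refine ⟨hi.1, ?_⟩
    have := (hlam.2 i hi.1).2
    rcases mul_eq_zero.mp this with h | h
    · exact absurd h hi.2.ne'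
    · exact h
  have hcompl : ∀ i ∈ I, q i x ≠ 0 → lam i = 0 := by
    intro i hi hne
    rcases mul_eq_zero.mp (hlam.2 i hi).2 with h | h
    · exact h
    · exact absurd h hne
  ext v
  constructor
  · rintro ⟨hvB, hvp⟩
    have gE : ∀ i ∈ E, fderiv ℝ (q i) x v = 0 := fun i hi =>
      bcone_fderiv_eq_zero (hdiff i) (hxF.1 i hi) (fun y hy => hy.1 i hi) hvB
    have gI : ∀ i ∈ ActiveI I q x, fderiv ℝ (q i) x v ≤ 0 := by
      intro i hi
      rw [ActiveI, Finset.mem_filter] at hi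
      exact bcone_fderiv_nonpos (hdiff i) hi.2 (fun y hy => hy.2 i hi.1) hvB
    have hIterm : ∀ i ∈ I, lam i * fderiv ℝ (q i) x v ≤ 0 := by
      intro i hi
      by_cases hact : q i x = 0
      · exact mul_nonpos_of_nonneg_of_nonpos (hlam.2 i hi).1
          (gI i (Finset.mem_filter.mpr ⟨hi, hact⟩))
      · rw [hcompl i hi hact, zero_mul]
    have hIsum : ∑ i ∈ I, lam i * fderiv ℝ (q i) x v = 0 := by
      have h0 : ∑ i, lam i * fderiv ℝ (q i) x v = 0 := by
        rw [← hsum v]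
        exact hvp
      rw [husplit] at h0
      have hE0 : ∑ i ∈ E, lam i * fderiv ℝ (q i) x v = 0 :=
        Finset.sum_eq_zero fun i hi => by rw [gE i hi, mul_zero]
      linarith
    have hIzero := (Finset.sum_eq_zero_iff_of_nonpos hIterm).mp hIsum
    refine ⟨?_, ?_⟩
    · intro i hi
      rcases Finset.mem_union.mp hi with hiE | hiP
      · rw [hg]; exact gE i hiE
      · rw [hg]
        have hiI : i ∈ I := (Finset.mem_filter.mp hiP).1
        have hpos : 0 < lam i := (Finset.mem_filter.mp hiP).2
        have := hIzero i hiI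
        rcases mul_eq_zero.mp this with h | h
        · exact absurd h hpos.ne'
        · exact h
    · intro i hi
      rw [hg]
      exact gI i (Finset.mem_sdiff.mp hi).1
  · rintro ⟨h1, h2⟩
    have gE' : ∀ i ∈ E, fderiv ℝ (q i) x v = 0 := fun i hi => by
      rw [← hg]; exact h1 i (Finset.mem_union_left _ hi)
    have gI' : ∀ i ∈ ActiveI I q x, fderiv ℝ (q i) x v ≤ 0 := by
      intro i hi
      by_cases hiP : i ∈ IplusF I lam
      · rw [← hg]; exact (h1 i (Finset.mem_union_right _ hiP)).le
      · rw [← hg]; exact h2 i (Finset.mem_sdiff.mpr ⟨hi, hiP⟩)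
    refine ⟨mem_bcone_of_linearized E I hdisj hunion q hq hxF hκ hUx hUprop gE' gI', ?_⟩
    show ⟪xs, v⟫ = 0
    rw [hsum v, husplit]
    have hE0 : ∑ i ∈ E, lam i * fderiv ℝ (q i) x v = 0 :=
      Finset.sum_eq_zero fun i hi => by rw [gE' i hi, mul_zero]
    have hI0 : ∑ i ∈ I, lam i * fderiv ℝ (q i) x v = 0 := by
      refine Finset.sum_eq_zero fun i hi => ?_
      by_cases hiP : i ∈ IplusF I lam
      · have : fderiv ℝ (q i) x v = 0 := by
          rw [← hg]; exact h1 i (Finset.mem_union_right _ hiP)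
        rw [this, mul_zero]
      · have hl0 : lam i = 0 := by
          rw [IplusF, Finset.mem_filter] at hiP
          push_neg at hiP
          exact le_antisymm (hiP (by exact hi)) (hlam.2 i hi).1
        rw [hl0, zero_mul]
    rw [hE0, hI0, add_zero]


end
end

section
/- (Lemma 2.1(iii)) Let MSCQ hold at x̄ ∈ Γ with some modulus. Then there exists a neighborhood V of x̄ such that for every x ∈ Γ ∩ V, every x* ∈ ℝⁿ with Λ(x, x*) ≠ ∅, and every v ∈ K(x, x*), the supremum of λ ↦ ⟨v, ∇²⟨λ, q⟩(x) v⟩ over Λ(x, x*) is attained; that is, Λ(x, x*; v) ≠ ∅. -/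
open Filter Topology Metric Set
open scoped RealInnerProductSpace

noncomputable section

variable {n : ℕ} {ι : Type*} [Fintype ι] [DecidableEq ι]

-- ===== auxiliary lemmas =====

/-- Linear programming attainment: a linear functional that is nonpositive on the recession
cone of a nonempty polyhedron attains its maximum on the polyhedron. -/
lemma lp_attain {ι : Type*} [DecidableEq ι] :
    ∀ (m : ℕ) (S : Finset ι), S.card ≤ m →
    ∀ {W : Type _} [AddCommGroup W] [Module ℝ W] (L : (ι → ℝ) →ₗ[ℝ] W) (c : W)
      (f : (ι → ℝ) →ₗ[ℝ] ℝ),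
      (∀ μ : ι → ℝ, L μ = 0 → (∀ i ∈ S, 0 ≤ μ i) → f μ ≤ 0) →
      ∀ l₀ : ι → ℝ, L l₀ = c → (∀ i ∈ S, 0 ≤ l₀ i) →
      ∃ l : ι → ℝ, (L l = c ∧ ∀ i ∈ S, 0 ≤ l i) ∧
        ∀ l' : ι → ℝ, L l' = c → (∀ i ∈ S, 0 ≤ l' i) → f l' ≤ f l := by
  intro m
  induction m with
  | zero =>
    intro S hS W _ _ L c f hrec l₀ hl₀ hs₀
    refine ⟨l₀, ⟨hl₀, hs₀⟩, fun l' hl' hs' => ?_⟩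
    have h1 : f (l' - l₀) ≤ 0 := hrec _ (by rw [map_sub, hl', hl₀, sub_self]) (fun i hi => by
      simp at hS; simp [hS] at hi)
    have : f l' - f l₀ = f (l' - l₀) := by rw [map_sub]
    linarith
  | succ m IH =>
    intro S hS W _ _ L c f hrec l₀ hl₀ hs₀
    by_cases hc : S.card ≤ m
    · exact IH S hc L c f hrec l₀ hl₀ hs₀
    obtain ⟨j, hj⟩ : S.Nonempty := Finset.card_pos.mp (by omega)
    set S₀ := S.erase j with hS₀def
    have hjS₀ : j ∉ S₀ := Finset.notMem_erase j S
    have hS₀card : S₀.card ≤ m := by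
      have h1 : S₀.card = S.card - 1 := by rw [hS₀def]; exact Finset.card_erase_of_mem hj
      have h2 : 1 ≤ S.card := Finset.card_pos.mpr ⟨j, hj⟩
      omega
    have hS₀sub : S₀ ⊆ S := Finset.erase_subset j S
    have hmemS : ∀ i ∈ S, i = j ∨ i ∈ S₀ := by
      intro i hi
      by_cases h : i = j
      · exact Or.inl h
      · exact Or.inr (Finset.mem_erase.mpr ⟨h, hi⟩)
    -- the face polyhedron data
    set L' : (ι → ℝ) →ₗ[ℝ] W × ℝ := L.prod (LinearMap.proj j) with hL'def
    have hrec' : ∀ μ : ι → ℝ, L' μ = 0 → (∀ i ∈ S₀, 0 ≤ μ i) → f μ ≤ 0 := by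
      intro μ hμ hsgn
      have h1 : L μ = 0 := congrArg Prod.fst hμ
      have h2 : μ j = 0 := congrArg Prod.snd hμ
      refine hrec μ h1 (fun i hi => ?_)
      rcases hmemS i hi with rfl | hmem
      · exact le_of_eq h2.symm
      · exact hsgn i hmem
    -- key step: given a map into the face that does not decrease f, we are done
    have key : (∀ l : ι → ℝ, L l = c → (∀ i ∈ S, 0 ≤ l i) →
        ∃ l'' : ι → ℝ, L l'' = c ∧ l'' j = 0 ∧ (∀ i ∈ S₀, 0 ≤ l'' i) ∧ f l ≤ f l'') →
        ∃ l : ι → ℝ, (L l = c ∧ ∀ i ∈ S, 0 ≤ l i) ∧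
          ∀ l' : ι → ℝ, L l' = c → (∀ i ∈ S, 0 ≤ l' i) → f l' ≤ f l := by
      intro hmap
      obtain ⟨l₀'', h1, h2, h3, _⟩ := hmap l₀ hl₀ hs₀
      obtain ⟨l, ⟨hlL, hlS⟩, hlmax⟩ :=
        IH S₀ hS₀card L' (c, 0) f hrec' l₀'' (by simp [hL'def, LinearMap.prod_apply, h1, h2]) h3
      have hlL1 : L l = c := congrArg Prod.fst hlL
      have hlj : l j = 0 := congrArg Prod.snd hlL
      refine ⟨l, ⟨hlL1, fun i hi => ?_⟩, fun l' hl' hs' => ?_⟩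
      · rcases hmemS i hi with rfl | hmem
        · exact le_of_eq hlj.symm
        · exact hlS i hmem
      · obtain ⟨l'', h1', h2', h3', h4'⟩ := hmap l' hl' hs'
        exact h4'.trans (hlmax l'' (by simp [hL'def, LinearMap.prod_apply, h1', h2']) h3')
    by_cases hb : ∃ μ : ι → ℝ, L μ = 0 ∧ (∀ i ∈ S₀, 0 ≤ μ i) ∧ 0 < f μ
    · obtain ⟨μ, hμL, hμS, hμf⟩ := hb
      have hμj : μ j < 0 := by
        by_contra h
        push_neg at h
        have := hrec μ hμL (fun i hi => by
          rcases hmemS i hi with rfl | hmem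
          · exact h
          · exact hμS i hmem)
        linarith
      apply key
      intro l hl hs
      set t := l j / (-μ j) with ht
      have htpos : 0 ≤ t := div_nonneg (hs j hj) (by linarith)
      refine ⟨l + t • μ, ?_, ?_, ?_, ?_⟩
      · rw [map_add, map_smul, hl, hμL, smul_zero, add_zero]
      · have hthis : t * -μ j = l j := by
          rw [ht]; exact div_mul_cancel₀ _ (by linarith)
        simp only [Pi.add_apply, Pi.smul_apply, smul_eq_mul]
        linear_combination -hthis
      · intro i hi
        have := mul_nonneg htpos (hμS i hi)
        have := hs i (hS₀sub hi)
        simp only [Pi.add_apply, Pi.smul_apply, smul_eq_mul]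
        linarith
      · rw [map_add, map_smul]
        have : 0 ≤ t * f μ := mul_nonneg htpos hμf.le
        simp only [smul_eq_mul]
        linarith
    · push_neg at hb
      have hrec₀ : ∀ μ : ι → ℝ, L μ = 0 → (∀ i ∈ S₀, 0 ≤ μ i) → f μ ≤ 0 := by
        intro μ h1 h2; exact hb μ h1 h2
      obtain ⟨p, ⟨hpL, hpS⟩, hpmax⟩ :=
        IH S₀ hS₀card L c f hrec₀ l₀ hl₀ (fun i hi => hs₀ i (hS₀sub hi))
      by_cases hpj : 0 ≤ p j
      · refine ⟨p, ⟨hpL, fun i hi => ?_⟩, fun l' hl' hs' => ?_⟩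
        · rcases hmemS i hi with rfl | hmem
          · exact hpj
          · exact hpS i hmem
        · exact hpmax l' hl' (fun i hi => hs' i (hS₀sub hi))
      · push_neg at hpj
        apply key
        intro l hl hs
        set t := l j / (l j - p j) with ht
        have hden : 0 < l j - p j := by have := hs j hj; linarith
        have ht0 : 0 ≤ t := div_nonneg (hs j hj) hden.le
        have ht1 : t ≤ 1 := by
          rw [ht, div_le_one hden]; linarith
        refine ⟨l + t • (p - l), ?_, ?_, ?_, ?_⟩
        · rw [map_add, map_smul, map_sub, hl, hpL, sub_self, smul_zero, add_zero]
        · have hseg : t * (l j - p j) = l j := by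
            rw [ht]; exact div_mul_cancel₀ _ hden.ne'
          simp only [Pi.add_apply, Pi.smul_apply, Pi.sub_apply, smul_eq_mul]
          linear_combination -hseg
        · intro i hi
          simp only [Pi.add_apply, Pi.smul_apply, Pi.sub_apply, smul_eq_mul]
          have h1 := hs i (hS₀sub hi)
          have h2 := hpS i hi
          nlinarith
        · rw [map_add, map_smul, map_sub]
          have hfl : f l ≤ f p := hpmax l hl (fun i hi => hs i (hS₀sub hi))
          simp only [smul_eq_mul]
          nlinarith

/-- The inverse of `toDual` as a genuine `ℝ`-continuous-linear map. -/
def dualIso (n : ℕ) : StrongDual ℝ (EuclideanSpace ℝ (Fin n)) →L[ℝ] EuclideanSpace ℝ (Fin n) where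
  toFun := fun φ => (InnerProductSpace.toDual ℝ (EuclideanSpace ℝ (Fin n))).symm φ
  map_add' := fun φ ψ => by simp
  map_smul' := fun r φ => by
    simp [map_smulₛₗ, starRingEnd_apply, star_trivial]
  cont := (InnerProductSpace.toDual ℝ (EuclideanSpace ℝ (Fin n))).symm.continuous

lemma gradient_eq_dualIso {n : ℕ} (f : EuclideanSpace ℝ (Fin n) → ℝ) (y : EuclideanSpace ℝ (Fin n)) :
    gradient f y = dualIso n (fderiv ℝ f y) := rfl

lemma fderiv_apply_eq_inner_gradient {n : ℕ} (f : EuclideanSpace ℝ (Fin n) → ℝ)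
    (y u : EuclideanSpace ℝ (Fin n)) :
    fderiv ℝ f y u = ⟪gradient f y, u⟫ := by
  rw [gradient]
  rw [← InnerProductSpace.toDual_apply_apply, LinearIsometryEquiv.apply_symm_apply]

/-- `gradient` is `C¹` for a `C²` function. -/
lemma contDiff_gradient {n : ℕ} (f : EuclideanSpace ℝ (Fin n) → ℝ) (hf : ContDiff ℝ 2 f) :
    ContDiff ℝ 1 (fun y => gradient f y) := by
  have h1 : ContDiff ℝ 1 (fderiv ℝ f) := hf.fderiv_right (by norm_num)
  have := (dualIso n).contDiff.comp h1
  exact this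

set_option maxHeartbeats 1000000 in
/-- Key second-order estimate along tangent directions. -/
lemma second_order_nonpos {n : ℕ} (g : EuclideanSpace ℝ (Fin n) → ℝ) (hg : ContDiff ℝ 2 g)
    (x v : EuclideanSpace ℝ (Fin n))
    (hx0 : g x = 0) (hgrad0 : gradient g x = 0)
    (t : ℕ → ℝ) (c : ℕ → EuclideanSpace ℝ (Fin n))
    (htpos : ∀ k, 0 < t k) (ht : Tendsto t atTop (𝓝 0)) (hc : Tendsto c atTop (𝓝 v))
    (hfeas : ∀ k, g (x + t k • c k) ≤ 0) :
    ⟪v, fderiv ℝ (fun y => gradient g y) x v⟫ ≤ 0 := by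
  set G : EuclideanSpace ℝ (Fin n) → EuclideanSpace ℝ (Fin n) := fun y => gradient g y with hGdef
  have hG1 : ContDiff ℝ 1 G := contDiff_gradient g hg
  have hGdiff : Differentiable ℝ G := hG1.differentiable one_ne_zero
  have hgdiff : Differentiable ℝ g := hg.differentiable (by norm_num)
  have hHcont : Continuous (fderiv ℝ G) := hG1.continuous_fderiv one_ne_zero
  have key : ∀ k, ∃ s, 0 < s ∧ s < t k ∧ ⟪fderiv ℝ G (x + s • c k) (c k), c k⟫ ≤ 0 := by
    intro k
    set w := c k with hwdef
    have line : ∀ s : ℝ, HasDerivAt (fun s : ℝ => x + s • w) w s := fun s => by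
      simpa using ((hasDerivAt_id s).smul_const w).const_add x
    have hφ : ∀ s : ℝ, HasDerivAt (fun s => g (x + s • w)) (⟪G (x + s • w), w⟫) s := by
      intro s
      have h1 := (hgdiff (x + s • w)).hasFDerivAt.comp_hasDerivAt s (line s)
      rwa [fderiv_apply_eq_inner_gradient] at h1
    have hφc : ContinuousOn (fun s : ℝ => g (x + s • w)) (Icc 0 (t k)) :=
      (hgdiff.continuous.comp (continuous_const.add (continuous_id.smul continuous_const))).continuousOn
    obtain ⟨s₁, hs₁mem, hs₁⟩ := exists_hasDerivAt_eq_slope (fun s => g (x + s • w))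
      (fun s => ⟪G (x + s • w), w⟫) (htpos k) hφc (fun s _ => hφ s)
    have hψs₁ : ⟪G (x + s₁ • w), w⟫ ≤ 0 := by
      rw [hs₁]
      apply div_nonpos_of_nonpos_of_nonneg
      · simpa [hx0] using hfeas k
      · simpa using (htpos k).le
    have hψ : ∀ s : ℝ, HasDerivAt (fun s => ⟪G (x + s • w), w⟫)
        (⟪fderiv ℝ G (x + s • w) w, w⟫) s := by
      intro s
      have h1 : HasDerivAt (fun s : ℝ => G (x + s • w)) (fderiv ℝ G (x + s • w) w) s :=
        by have := (hGdiff (x + s • w)).hasFDerivAt.comp_hasDerivAt s (line s); exact this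
      have h2 := h1.inner ℝ (hasDerivAt_const s w)
      simpa using h2
    have hψc : ContinuousOn (fun s : ℝ => ⟪G (x + s • w), w⟫) (Icc 0 s₁) :=
      (Continuous.inner (hG1.continuous.comp (continuous_const.add (continuous_id.smul continuous_const))) continuous_const).continuousOn
    obtain ⟨s₂, hs₂mem, hs₂⟩ := exists_hasDerivAt_eq_slope (fun s => ⟪G (x + s • w), w⟫)
      (fun s => ⟪fderiv ℝ G (x + s • w) w, w⟫) hs₁mem.1 hψc (fun s _ => hψ s)
    refine ⟨s₂, hs₂mem.1, hs₂mem.2.trans hs₁mem.2, ?_⟩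
    rw [hs₂]
    have hψ0 : ⟪G (x + (0:ℝ) • w), w⟫ = 0 := by
      simp only [zero_smul, add_zero]
      rw [hGdef]
      simp only [hgrad0]
      exact inner_zero_left w
    apply div_nonpos_of_nonpos_of_nonneg
    · rw [hψ0]; simpa using hψs₁
    · simpa using hs₁mem.1.le
  choose s hs1 hs2 hs3 using key
  have hstend : Tendsto s atTop (𝓝 0) :=
    tendsto_of_tendsto_of_tendsto_of_le_of_le tendsto_const_nhds ht
      (fun k => (hs1 k).le) (fun k => (hs2 k).le)
  have hpt : Tendsto (fun k => x + s k • c k) atTop (𝓝 x) := by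
    have h1 : Tendsto (fun k => s k • c k) atTop (𝓝 ((0:ℝ) • v)) := hstend.smul hc
    simpa using tendsto_const_nhds.add h1
  have hfd : Tendsto (fun k => fderiv ℝ G (x + s k • c k)) atTop (𝓝 (fderiv ℝ G x)) :=
    (hHcont.tendsto x).comp hpt
  have happ : Tendsto (fun k => fderiv ℝ G (x + s k • c k) (c k)) atTop
      (𝓝 (fderiv ℝ G x v)) := by
    have hb : Continuous (fun p : (EuclideanSpace ℝ (Fin n) →L[ℝ] EuclideanSpace ℝ (Fin n)) ×
        EuclideanSpace ℝ (Fin n) => p.1 p.2) := isBoundedBilinearMap_apply.continuous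
    exact (hb.tendsto (fderiv ℝ G x, v)).comp (hfd.prodMk_nhds hc)
  have hlim : Tendsto (fun k => ⟪fderiv ℝ G (x + s k • c k) (c k), c k⟫) atTop
      (𝓝 ⟪fderiv ℝ G x v, v⟫) := happ.inner hc
  have hle : ⟪fderiv ℝ G x v, v⟫ ≤ 0 := le_of_tendsto hlim (Filter.Eventually.of_forall hs3)
  rw [real_inner_comm]
  exact hle


/-- Under feasibility, the quadratic form of any multiplier for `x* = 0` is nonpositive
along tangent directions. -/
lemma quad_nonpos {n : ℕ} {ι : Type*} [Fintype ι] [DecidableEq ι]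
    (E I : Finset ι) (hunion : E ∪ I = Finset.univ)
    (q : ι → EuclideanSpace ℝ (Fin n) → ℝ) (hq : ∀ i, ContDiff ℝ 2 (q i))
    (x : EuclideanSpace ℝ (Fin n)) (hx : x ∈ Feas E I q)
    (v : EuclideanSpace ℝ (Fin n)) (hv : v ∈ BCone (Feas E I q) x)
    (mu : EuclideanSpace ℝ ι) (hmu : mu ∈ Mult I q x 0) :
    QuadComb q mu x v ≤ 0 := by
  obtain ⟨t, c, htpos, ht, hc, hfeas⟩ := hv
  set g : EuclideanSpace ℝ (Fin n) → ℝ := fun y => ∑ i, mu i * q i y with hgdef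
  have hg : ContDiff ℝ 2 g := ContDiff.sum fun i _ => contDiff_const.mul (hq i)
  have hqdiff : ∀ i, Differentiable ℝ (q i) := fun i => (hq i).differentiable (by norm_num)
  have hfg : ∀ y, fderiv ℝ g y = ∑ i, mu i • fderiv ℝ (q i) y := by
    intro y
    rw [hgdef, fderiv_fun_sum (fun i _ => ((hqdiff i) y).const_mul (mu i))]
    exact Finset.sum_congr rfl fun i _ => fderiv_const_mul ((hqdiff i) y) (mu i)
  have hGg : ∀ y, gradient g y = ∑ i, mu i • gradient (q i) y := by
    intro y
    rw [gradient_eq_dualIso, hfg, map_sum]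
    exact Finset.sum_congr rfl fun i _ => by rw [map_smul, gradient_eq_dualIso]
  have hiEI : ∀ i : ι, i ∈ E ∨ i ∈ I := by
    intro i
    have : i ∈ E ∪ I := by rw [hunion]; exact Finset.mem_univ i
    exact Finset.mem_union.mp this
  have hgx0 : g x = 0 := by
    rw [hgdef]
    apply Finset.sum_eq_zero
    intro i _
    rcases hiEI i with hE | hI
    · rw [hx.1 i hE, mul_zero]
    · exact (hmu.2 i hI).2
  have hgrad0 : gradient g x = 0 := by rw [hGg]; exact hmu.1
  have hfeask : ∀ k, g (x + t k • c k) ≤ 0 := by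
    intro k
    have hmemk := hfeas k
    rw [hgdef]
    apply Finset.sum_nonpos
    intro i _
    rcases hiEI i with hE | hI
    · rw [hmemk.1 i hE, mul_zero]
    · have h1 := (hmu.2 i hI).1
      have h2 := hmemk.2 i hI
      nlinarith
  have hGdiffi : ∀ i, Differentiable ℝ (fun y => gradient (q i) y) :=
    fun i => (contDiff_gradient (q i) (hq i)).differentiable one_ne_zero
  have hHg : fderiv ℝ (fun y => gradient g y) x
      = ∑ i, mu i • fderiv ℝ (fun y => gradient (q i) y) x := by
    have heq : (fun y => gradient g y) = fun y => ∑ i, mu i • gradient (q i) y := funext hGg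
    rw [heq, fderiv_fun_sum (A := fun i y => mu i • gradient (q i) y)
      (fun i _ => ((hGdiffi i) x).const_smul (mu i))]
    exact Finset.sum_congr rfl fun i _ => fderiv_const_smul ((hGdiffi i) x) (mu i)
  have hle := second_order_nonpos g hg x v hgx0 hgrad0 t c htpos ht hc hfeask
  rw [hHg] at hle
  have hqc : QuadComb q mu x v
      = ⟪v, (∑ i, mu i • fderiv ℝ (fun y => gradient (q i) y) x) v⟫ := by
    rw [QuadComb, HessComb]
    congr 1
    rw [ContinuousLinearMap.sum_apply]
    exact Finset.sum_congr rfl fun i _ => by rw [ContinuousLinearMap.smul_apply]; rfl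
  rw [hqc]
  exact hle

/-- **Lemma 2.1(iii).** Under MSCQ at `x̄ ∈ Γ`, for `x ∈ Γ` near `x̄`, any `x*` with
`Λ(x, x*) ≠ ∅` and any `v ∈ K(x, x*)`, the maximum of `λ ↦ ⟨v, ∇²⟨λ,q⟩(x)v⟩` over
`Λ(x, x*)` is attained, i.e. `Λ(x, x*; v) ≠ ∅`. -/
theorem multArgmax_nonempty
    {n : ℕ} {ι : Type*} [Fintype ι] [DecidableEq ι] [Nonempty ι]
    (E I : Finset ι) (hdisj : Disjoint E I) (hunion : E ∪ I = Finset.univ)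
    (q : ι → EuclideanSpace ℝ (Fin n) → ℝ) (hq : ∀ i, ContDiff ℝ 2 (q i))
    (xbar : EuclideanSpace ℝ (Fin n)) (hfeas : xbar ∈ Feas E I q)
    (hmscq : ∃ κ > (0:ℝ), MSCQat E I q xbar κ) :
    ∃ V ∈ 𝓝 xbar, ∀ x ∈ Feas E I q ∩ V, ∀ xs : EuclideanSpace ℝ (Fin n),
      (Mult I q x xs).Nonempty → ∀ v ∈ Crit E I q x xs,
        (MultArgmax I q x xs v).Nonempty := by
  classical
  refine ⟨Set.univ, Filter.univ_mem, ?_⟩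
  rintro x ⟨hxF, -⟩ xs ⟨lam0, hlam0⟩ v ⟨hvT, hvperp⟩
  set Z : Finset ι := I.filter (fun i => q i x ≠ 0) with hZ
  set a : ι → ℝ := fun i => ⟪v, HessApp (q i) x v⟫ with ha
  set gv : ι → EuclideanSpace ℝ (Fin n) := fun i => gradient (q i) x with hgv
  set L : (ι → ℝ) →ₗ[ℝ] EuclideanSpace ℝ (Fin n) × (ι → ℝ) :=
    (Fintype.linearCombination ℝ gv).prod
      (LinearMap.pi (fun i => if i ∈ Z then LinearMap.proj i else 0)) with hL
  set f : (ι → ℝ) →ₗ[ℝ] ℝ := Fintype.linearCombination ℝ a with hf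
  have hLfst : ∀ l : ι → ℝ, (L l).1 = ∑ i, l i • gv i := by
    intro l
    simp [hL, LinearMap.prod_apply, Fintype.linearCombination_apply]
  have hLsnd : ∀ (l : ι → ℝ) (i : ι), (L l).2 i = if i ∈ Z then l i else 0 := by
    intro l i
    simp only [hL, LinearMap.prod_apply, Pi.prod, LinearMap.pi_apply]
    split <;> rename_i h <;> simp [LinearMap.proj, h]
  have hfval : ∀ l : ι → ℝ, f l = ∑ i, l i * a i := by
    intro l
    simp [hf, Fintype.linearCombination_apply, smul_eq_mul]
  have hquad : ∀ lam : EuclideanSpace ℝ ι, QuadComb q lam x v = ∑ i, lam i * a i := by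
    intro lam
    rw [QuadComb, HessComb, inner_sum]
    exact Finset.sum_congr rfl fun i _ => real_inner_smul_right v _ (lam i)
  have hmem : ∀ (y : EuclideanSpace ℝ (Fin n)) (l : ι → ℝ),
      (L l = (y, 0) ∧ ∀ i ∈ I, 0 ≤ l i) ↔ (WithLp.toLp 2 l ∈ Mult I q x y) := by
    intro y l
    constructor
    · rintro ⟨hLl, hsgn⟩
      have h1 : ∑ i, l i • gv i = y := by rw [← hLfst l, hLl]
      refine ⟨h1, fun i hi => ⟨hsgn i hi, ?_⟩⟩
      by_cases hq0 : q i x = 0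
      · rw [hq0, mul_zero]
      · have hiZ : i ∈ Z := Finset.mem_filter.mpr ⟨hi, hq0⟩
        have h2 : (L l).2 i = 0 := by rw [hLl]; rfl
        rw [hLsnd l i, if_pos hiZ] at h2
        exact (by rw [h2, zero_mul] : l i * q i x = 0)
    · rintro ⟨hsum, hcomp⟩
      constructor
      · apply Prod.ext
        · rw [hLfst l]; exact hsum
        · funext i
          rw [hLsnd l i]
          by_cases hiZ : i ∈ Z
          · rw [if_pos hiZ]
            obtain ⟨hiI, hq0⟩ := Finset.mem_filter.mp hiZ
            have := (hcomp i hiI).2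
            exact (mul_eq_zero.mp this).resolve_right hq0
          · rw [if_neg hiZ]; rfl
      · exact fun i hi => (hcomp i hi).1
  have hrec : ∀ m : ι → ℝ, L m = 0 → (∀ i ∈ I, 0 ≤ m i) → f m ≤ 0 := by
    intro m hm hsgn
    have hm' : WithLp.toLp 2 m ∈ Mult I q x 0 := (hmem 0 m).mp ⟨hm, hsgn⟩
    have := quad_nonpos E I hunion q hq x hxF v hvT (WithLp.toLp 2 m) hm'
    rw [hquad (WithLp.toLp 2 m)] at this
    rw [hfval m]
    exact this
  have hl0 := (hmem xs (fun i => lam0 i)).mpr hlam0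
  obtain ⟨l, ⟨hlL, hlS⟩, hlmax⟩ := lp_attain I.card I le_rfl L (xs, 0) f hrec
    (fun i => lam0 i) hl0.1 hl0.2
  have hlMult : WithLp.toLp 2 l ∈ Mult I q x xs := (hmem xs l).mp ⟨hlL, hlS⟩
  refine ⟨WithLp.toLp 2 l, hlMult, ?_⟩
  intro mu hmu
  have hmu' := (hmem xs (fun i => mu i)).mpr hmu
  have hle := hlmax (fun i => mu i) hmu'.1 hmu'.2
  rw [hfval, hfval] at hle
  rw [hquad mu, hquad (WithLp.toLp 2 l)]
  exact hle

end
end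

section
/- (Multiplier bound under MSCQ, used in the proof of Theorem 3.1(iii)) Suppose MSCQ holds at x ∈ Γ with modulus γ > 0, and let x* ∈ ℝⁿ be such that Λ(x, x*) ≠ ∅. Then there exists λ ∈ Λ(x, x*) with ‖λ‖ ≤ γ‖x*‖. -/
open Filter Topology Metric Set
open scoped RealInnerProductSpace

noncomputable section

variable {n : ℕ} {ι : Type*} [Fintype ι] [DecidableEq ι]

section EuclidHelpers
variable {ι : Type*} [Fintype ι]
lemma euclid_inner (v w : EuclideanSpace ℝ ι) : ⟪v, w⟫ = ∑ i, v i * w i := by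
  simp [PiLp.inner_apply, RCLike.inner_apply, starRingEnd_apply]
  exact Finset.sum_congr rfl fun _ _ => mul_comm _ _
lemma euclid_abs_coord_le (v : EuclideanSpace ℝ ι) (i : ι) : |v i| ≤ ‖v‖ := by
  have h1 : |v i| ^ 2 ≤ ‖v‖ ^ 2 := by
    rw [← real_inner_self_eq_norm_sq, euclid_inner, sq_abs, sq]
    exact Finset.single_le_sum (f := fun j => v j * v j)
        (fun j _ => mul_self_nonneg _) (Finset.mem_univ i)
  exact (pow_le_pow_iff_left₀ (abs_nonneg _) (norm_nonneg _) two_ne_zero).mp h1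

lemma exists_proj_vi {F : Type*} [NormedAddCommGroup F] [InnerProductSpace ℝ F] [CompleteSpace F]
    {S : Set F} (hne : S.Nonempty) (hcl : IsClosed S) (hco : Convex ℝ S) (b : F) :
    ∃ v ∈ S, ∀ u ∈ S, ⟪b - v, u - v⟫ ≤ 0 := by
  obtain ⟨v, hv, hmin⟩ := exists_norm_eq_iInf_of_complete_convex hne hcl.isComplete hco b
  exact ⟨v, hv, (norm_eq_iInf_iff_real_inner_le_zero hco hv).mp hmin⟩
lemma euclid_norm_sq' (v : EuclideanSpace ℝ ι) : ‖v‖ ^ 2 = ∑ i, v i ^ 2 := by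
  rw [← real_inner_self_eq_norm_sq, euclid_inner]
  simp [sq]

lemma euclid_norm_le_of_abs_le {v w : EuclideanSpace ℝ ι} (h : ∀ i, |v i| ≤ w i) : ‖v‖ ≤ ‖w‖ := by
  have h1 : ‖v‖ ^ 2 ≤ ‖w‖ ^ 2 := by
    rw [euclid_norm_sq', euclid_norm_sq']
    refine Finset.sum_le_sum fun i _ => ?_
    calc v i ^ 2 = |v i| ^ 2 := (sq_abs _).symm
    _ ≤ w i ^ 2 := pow_le_pow_left₀ (abs_nonneg _) (h i) 2
  exact (pow_le_pow_iff_left₀ (norm_nonneg _) (norm_nonneg _) two_ne_zero).mp h1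

lemma euclid_norm_abs_add_const (v : EuclideanSpace ℝ ι) (c : ℝ) (hc : 0 ≤ c) :
    ‖(show EuclideanSpace ℝ ι from WithLp.toLp 2 (fun i => |v i| + c))‖ ≤ ‖v‖ + c * Real.sqrt (Fintype.card ι) := by
  have h : (show EuclideanSpace ℝ ι from WithLp.toLp 2 (fun i => |v i| + c))
      = (show EuclideanSpace ℝ ι from WithLp.toLp 2 (fun i => |v i|)) + (show EuclideanSpace ℝ ι from WithLp.toLp 2 (fun _ => c)) := rfl
  rw [h]
  refine (norm_add_le _ _).trans (add_le_add ?_ ?_)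
  · apply le_of_eq
    have hsq : ‖(show EuclideanSpace ℝ ι from WithLp.toLp 2 (fun i => |v i|))‖^2 = ‖v‖^2 := by
      rw [euclid_norm_sq', euclid_norm_sq']; simp
    have := congrArg Real.sqrt hsq
    rwa [Real.sqrt_sq (norm_nonneg _), Real.sqrt_sq (norm_nonneg _)] at this
  · apply le_of_eq
    have h2 : ‖(show EuclideanSpace ℝ ι from WithLp.toLp 2 (fun _ => c))‖^2 = (c * Real.sqrt (Fintype.card ι))^2 := by
      rw [euclid_norm_sq', mul_pow, Real.sq_sqrt (by positivity)]
      simp [mul_comm]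
    have := congrArg Real.sqrt h2
    rwa [Real.sqrt_sq (norm_nonneg _), Real.sqrt_sq (by positivity)] at this

lemma exists_min_norm {F : Type*} [NormedAddCommGroup F] [InnerProductSpace ℝ F] [CompleteSpace F]
    {S : Set F} (hne : S.Nonempty) (hcl : IsClosed S) (hco : Convex ℝ S) :
    ∃ v ∈ S, ∀ u ∈ S, ‖v‖ ≤ ‖u‖ := by
  obtain ⟨v, hv, hmin⟩ := exists_norm_eq_iInf_of_complete_convex hne hcl.isComplete hco 0
  refine ⟨v, hv, fun u hu => ?_⟩
  have : Nonempty S := hne.to_subtype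
  have h1 : (⨅ w : S, ‖(0:F) - w‖) ≤ ‖(0:F) - u‖ :=
    ciInf_le (⟨0, Set.forall_mem_range.2 fun _ => norm_nonneg _⟩ : BddBelow (Set.range fun w : S => ‖(0:F) - w‖)) ⟨u, hu⟩
  rw [← hmin] at h1
  simpa using h1

end EuclidHelpers

lemma approx_z
    (E I : Finset ι) (hdisj : Disjoint E I)
    (q : ι → EuclideanSpace ℝ (Fin n) → ℝ)
    (x xs : EuclideanSpace ℝ (Fin n))
    (lam0 : EuclideanSpace ℝ ι) (hlam0 : lam0 ∈ Mult I q x xs)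
    (hmin : ∀ mu ∈ Mult I q x xs, ‖lam0‖ ≤ ‖mu‖)
    {ε : ℝ} (hε : 0 < ε) :
    ∃ z : EuclideanSpace ℝ (Fin n),
      (∀ i ∈ E, |⟪gradient (q i) x, z⟫ - lam0 i| ≤ ε) ∧
      (∀ i ∈ I, q i x = 0 → 0 < lam0 i → |⟪gradient (q i) x, z⟫ - lam0 i| ≤ ε) ∧
      (∀ i ∈ I, q i x = 0 → lam0 i ≤ 0 → ⟪gradient (q i) x, z⟫ ≤ ε) := by
  classical
  set a : ι → EuclideanSpace ℝ (Fin n) := fun i => gradient (q i) x with ha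
  set K : Set (EuclideanSpace ℝ ι) :=
    {y | ∃ z, (∀ i ∈ E, y i = ⟪a i, z⟫) ∧
      ∀ i ∈ I, q i x = 0 →
        ((0 < lam0 i → y i = ⟪a i, z⟫) ∧ (lam0 i ≤ 0 → ⟪a i, z⟫ ≤ y i))} with hK
  -- linear images belong to K
  have hlinK : ∀ z : EuclideanSpace ℝ (Fin n),
      (show EuclideanSpace ℝ ι from WithLp.toLp 2 (fun i => ⟪a i, z⟫)) ∈ K := by
    intro z
    exact ⟨z, fun i _ => rfl, fun i _ _ => ⟨fun _ => rfl, fun _ => le_refl _⟩⟩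
  have hK0 : (0 : EuclideanSpace ℝ ι) ∈ K := by
    have := hlinK 0
    simpa [← Pi.zero_def] using this
  -- K is convex
  have hKconv : Convex ℝ K := by
    rintro y₁ ⟨z₁, hE₁, hI₁⟩ y₂ ⟨z₂, hE₂, hI₂⟩ s t hs ht hst
    refine ⟨s • z₁ + t • z₂, fun i hi => ?_, fun i hi hact => ⟨fun hpos => ?_, fun hneg => ?_⟩⟩
    · simp [inner_add_right, real_inner_smul_right, hE₁ i hi, hE₂ i hi, Finset.mul_sum, mul_left_comm]
    · simp [inner_add_right, real_inner_smul_right, (hI₁ i hi hact).1 hpos, (hI₂ i hi hact).1 hpos, Finset.mul_sum, mul_left_comm]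
    · have h1 := (hI₁ i hi hact).2 hneg
      have h2 := (hI₂ i hi hact).2 hneg
      calc ⟪a i, s • z₁ + t • z₂⟫ = s * ⟪a i, z₁⟫ + t * ⟪a i, z₂⟫ := by
            simp [inner_add_right, real_inner_smul_right, Finset.mul_sum, mul_left_comm]
      _ ≤ s * y₁ i + t * y₂ i := by
            apply add_le_add (mul_le_mul_of_nonneg_left h1 hs) (mul_le_mul_of_nonneg_left h2 ht)
      _ = (s • y₁ + t • y₂) i := by simp [PiLp.add_apply, PiLp.smul_apply]
  -- K is a cone
  have hKcone : ∀ c : ℝ, 0 ≤ c → ∀ y ∈ K, c • y ∈ K := by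
    rintro c hc y ⟨z, hE₁, hI₁⟩
    refine ⟨c • z, fun i hi => ?_, fun i hi hact => ⟨fun hpos => ?_, fun hneg => ?_⟩⟩
    · simp [real_inner_smul_right, hE₁ i hi, PiLp.smul_apply, Finset.mul_sum, mul_left_comm]
    · simp [real_inner_smul_right, (hI₁ i hi hact).1 hpos, PiLp.smul_apply, Finset.mul_sum, mul_left_comm]
    · have h1 := (hI₁ i hi hact).2 hneg
      have : c * ⟪a i, z⟫ ≤ c * y i := mul_le_mul_of_nonneg_left h1 hc
      simpa [real_inner_smul_right, PiLp.smul_apply, Finset.mul_sum, mul_left_comm] using this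
  -- main claim: lam0 ∈ closure K
  have hmem : lam0 ∈ closure K := by
    by_contra hnot
    obtain ⟨p, hp, hvi⟩ := exists_proj_vi ⟨0, subset_closure hK0⟩ isClosed_closure
      (hKconv.closure) lam0
    set d : EuclideanSpace ℝ ι := lam0 - p with hd
    have hdne : d ≠ 0 := by
      intro h
      exact hnot (by rwa [sub_eq_zero.mp h])
    -- closure of K is a cone
    have hclcone : ∀ c : ℝ, 0 ≤ c → ∀ y ∈ closure K, c • y ∈ closure K := by
      intro c hc y hy
      exact map_mem_closure (continuous_const_smul c) hy (fun w hw => hKcone c hc w hw)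
    have hdp : ⟪d, p⟫ = 0 := by
      have h0 := hvi 0 (subset_closure hK0)
      have h2 := hvi ((2:ℝ) • p) (hclcone 2 (by norm_num) p hp)
      have h2' : (2:ℝ) • p - p = p := by
        rw [two_smul]; abel
      rw [h2'] at h2
      simp only [zero_sub, inner_neg_right] at h0
      linarith
    have hKle : ∀ y ∈ K, ⟪d, y⟫ ≤ 0 := by
      intro y hy
      have := hvi y (subset_closure hy)
      rw [inner_sub_right, hdp] at this
      linarith
    -- sum of d i • a i vanishes
    have hsum0 : ∑ i, d i • a i = 0 := by
      have key : ∀ z : EuclideanSpace ℝ (Fin n), ⟪∑ i, d i • a i, z⟫ = 0 := by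
        intro z
        have h1 : ⟪d, (show EuclideanSpace ℝ ι from WithLp.toLp 2 (fun i => ⟪a i, z⟫))⟫
            = ⟪∑ i, d i • a i, z⟫ := by
          rw [euclid_inner, sum_inner]
          refine Finset.sum_congr rfl fun i _ => ?_
          rw [real_inner_smul_left]
        have hz1 := hKle _ (hlinK z)
        have hz2 := hKle _ (hlinK (-z))
        have hneg : (show EuclideanSpace ℝ ι from WithLp.toLp 2 (fun i => ⟪a i, -z⟫))
            = -(show EuclideanSpace ℝ ι from WithLp.toLp 2 (fun i => ⟪a i, z⟫)) := by
          ext i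
          simp [inner_neg_right]
        rw [hneg, inner_neg_right] at hz2
        rw [h1] at hz1
        rw [show ⟪d, (show EuclideanSpace ℝ ι from WithLp.toLp 2 (fun i => ⟪a i, z⟫))⟫
            = ⟪∑ i, d i • a i, z⟫ from h1] at hz2
        linarith
      have := key (∑ i, d i • a i)
      exact inner_self_eq_zero.mp this
    -- coordinate signs of d
    have hsingleK1 : ∀ i ∈ I, q i x = 0 → lam0 i ≤ 0 → (EuclideanSpace.single i (1:ℝ)) ∈ K := by
      intro i hi hact hneg
      refine ⟨0, fun j hj => ?_, fun j hj hactj => ⟨fun hpos => ?_, fun _ => ?_⟩⟩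
      · have hne : i ≠ j := fun h => (Finset.disjoint_left.mp hdisj hj) (h ▸ hi)
        simp [EuclideanSpace.single_apply, hne, Ne.symm hne]
      · have hne : i ≠ j := by
          intro h; subst h; exact absurd hpos (not_lt.mpr hneg)
        simp [EuclideanSpace.single_apply, hne, Ne.symm hne]
      · rw [inner_zero_right, EuclideanSpace.single_apply]
        split <;> norm_num
    have hsingleKN : ∀ i ∈ I, q i x ≠ 0 → ∀ c : ℝ, (EuclideanSpace.single i c) ∈ K := by
      intro i hi hq c
      refine ⟨0, fun j hj => ?_, fun j hj hactj => ⟨fun hpos => ?_, fun _ => ?_⟩⟩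
      · have hne : i ≠ j := fun h => (Finset.disjoint_left.mp hdisj hj) (h ▸ hi)
        simp [EuclideanSpace.single_apply, hne, Ne.symm hne]
      · have hne : i ≠ j := fun h => hq (h ▸ hactj)
        simp [EuclideanSpace.single_apply, hne, Ne.symm hne]
      · have hne : i ≠ j := fun h => hq (h ▸ hactj)
        simp [EuclideanSpace.single_apply, hne, Ne.symm hne]
    have hinner_single : ∀ (i : ι) (c : ℝ), ⟪d, EuclideanSpace.single i c⟫ = c * d i := by
      intro i c
      rw [EuclideanSpace.inner_single_right]
      simp
    have hdneg : ∀ i ∈ I, q i x = 0 → lam0 i ≤ 0 → d i ≤ 0 := by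
      intro i hi hact hneg
      have := hKle _ (hsingleK1 i hi hact hneg)
      rw [hinner_single] at this
      linarith
    have hdN : ∀ i ∈ I, q i x ≠ 0 → d i = 0 := by
      intro i hi hq
      have h1 := hKle _ (hsingleKN i hi hq 1)
      have h2 := hKle _ (hsingleKN i hi hq (-1))
      rw [hinner_single] at h1 h2
      linarith
    have hdlam : ⟪d, lam0⟫ = ‖d‖ ^ 2 := by
      have hl : lam0 = p + d := by rw [hd]; abel
      rw [hl, inner_add_right, hdp, zero_add, real_inner_self_eq_norm_sq]
    -- choose s
    have h1 : ∀ i : ι, ∀ᶠ s in 𝓝[>] (0:ℝ), 0 < lam0 i → 0 ≤ lam0 i - s * d i := by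
      intro i
      by_cases h : 0 < lam0 i
      · have hcont : Tendsto (fun s : ℝ => lam0 i - s * d i) (𝓝[>] 0) (𝓝 (lam0 i - 0 * d i)) :=
          Tendsto.mono_left
            ((continuous_const.sub (continuous_id.mul continuous_const)).tendsto 0)
            nhdsWithin_le_nhds
        rw [zero_mul, sub_zero] at hcont
        exact (hcont.eventually (eventually_ge_nhds h)).mono fun s hs _ => hs
      · exact Eventually.of_forall fun s hp => absurd hp h
    have h2 : ∀ᶠ s in 𝓝[>] (0:ℝ), s < 2 :=
      Eventually.filter_mono nhdsWithin_le_nhds (eventually_lt_nhds (by norm_num))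
    have h3 : ∀ᶠ s in 𝓝[>] (0:ℝ), 0 < s := eventually_mem_nhdsWithin
    obtain ⟨s, ⟨hs2, hs0⟩, hsI⟩ := ((h2.and h3).and (eventually_all.mpr h1)).exists
    set mu : EuclideanSpace ℝ ι := lam0 - s • d with hmu
    have hmuapp : ∀ i, mu i = lam0 i - s * d i := by
      intro i; rw [hmu]; simp
    have hmuMult : mu ∈ Mult I q x xs := by
      constructor
      · have : ∀ i : ι, mu i • a i = lam0 i • a i - s • (d i • a i) := by
          intro i
          rw [hmuapp i, sub_smul, mul_smul]
        calc ∑ i, mu i • a i = ∑ i, (lam0 i • a i - s • (d i • a i)) := by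
              exact Finset.sum_congr rfl fun i _ => this i
        _ = ∑ i, lam0 i • a i - s • ∑ i, d i • a i := by
              rw [Finset.sum_sub_distrib, Finset.smul_sum]
        _ = xs := by rw [hsum0, smul_zero, sub_zero, hlam0.1]
      · intro i hi
        by_cases hact : q i x = 0
        · constructor
          · by_cases hpos : 0 < lam0 i
            · have := hsI i hpos
              rw [hmuapp i]; linarith
            · have hle : lam0 i ≤ 0 := not_lt.mp hpos
              have hd1 := hdneg i hi hact hle
              have hl1 := (hlam0.2 i hi).1
              rw [hmuapp i]
              nlinarith
          · rw [hact, mul_zero]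
        · have hl0 : lam0 i = 0 := by
            have := (hlam0.2 i hi).2
            rcases mul_eq_zero.mp this with h | h
            · exact h
            · exact absurd h hact
          have hd0 := hdN i hi hact
          rw [hmuapp i, hl0, hd0, mul_zero, sub_zero]
          exact ⟨le_refl 0, by rw [zero_mul]⟩
    -- contradiction with minimality
    have hd2pos : (0:ℝ) < ‖d‖ ^ 2 := pow_pos (norm_pos_iff.mpr hdne) 2
    have hsq : ‖mu‖ ^ 2 = ‖lam0‖ ^ 2 + (s ^ 2 - 2 * s) * ‖d‖ ^ 2 := by
      rw [hmu, norm_sub_sq_real, real_inner_smul_right, real_inner_comm, hdlam,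
        norm_smul, Real.norm_eq_abs, mul_pow, sq_abs]
      ring
    have hlt : ‖mu‖ ^ 2 < ‖lam0‖ ^ 2 := by
      rw [hsq]
      nlinarith [mul_pos (mul_pos hs0 (by linarith : (0:ℝ) < 2 - s)) hd2pos]
    have hge := hmin mu hmuMult
    have := pow_le_pow_left₀ (norm_nonneg lam0) hge 2
    linarith
  -- extract approximate z from the closure
  rw [Metric.mem_closure_iff] at hmem
  obtain ⟨y, hyK, hdist⟩ := hmem ε hε
  obtain ⟨z, hEy, hIy⟩ := hyK
  rw [dist_eq_norm] at hdist
  have hco : ∀ i, |lam0 i - y i| ≤ ε := by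
    intro i
    have h1 := euclid_abs_coord_le (lam0 - y) i
    have h2 : (lam0 - y) i = lam0 i - y i := by simp
    rw [h2] at h1
    linarith
  refine ⟨z, fun i hi => ?_, fun i hi hact hpos => ?_, fun i hi hact hneg => ?_⟩
  · rw [← hEy i hi, abs_sub_comm]
    exact hco i
  · rw [← (hIy i hi hact).1 hpos, abs_sub_comm]
    exact hco i
  · have h1 := (hIy i hi hact).2 hneg
    have h2 := abs_le.mp (hco i)
    linarith


set_option maxHeartbeats 4000000 in
/-- **Multiplier bound under MSCQ.** If MSCQ holds at `x ∈ Γ` with modulus `γ > 0` and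
`Λ(x, x*) ≠ ∅`, then some `λ ∈ Λ(x, x*)` satisfies `‖λ‖ ≤ γ‖x*‖`. -/
theorem multiplier_bound
    {n : ℕ} {ι : Type*} [Fintype ι] [DecidableEq ι] [Nonempty ι]
    (E I : Finset ι) (hdisj : Disjoint E I) (hunion : E ∪ I = Finset.univ)
    (q : ι → EuclideanSpace ℝ (Fin n) → ℝ) (hq : ∀ i, ContDiff ℝ 2 (q i))
    (x xs : EuclideanSpace ℝ (Fin n)) (hfeas : x ∈ Feas E I q)
    (γ : ℝ) (hγ : 0 < γ) (hmscq : MSCQat E I q x γ)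
    (hne : (Mult I q x xs).Nonempty) :
    ∃ lam ∈ Mult I q x xs, ‖lam‖ ≤ γ * ‖xs‖ := by
  classical
  obtain ⟨U, hU, hUdist⟩ := hmscq
  set a : ι → EuclideanSpace ℝ (Fin n) := fun i => gradient (q i) x with ha
  have hpair : ∀ i (z : EuclideanSpace ℝ (Fin n)), ⟪a i, z⟫ = fderiv ℝ (q i) x z :=
    fun i z => InnerProductSpace.toDual_symm_apply
  have hdiffable : ∀ i (y : EuclideanSpace ℝ (Fin n)), DifferentiableAt ℝ (q i) y :=
    fun i y => ((hq i).differentiable (by norm_num)).differentiableAt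
  have hconti : ∀ i : ι, Continuous fun lam : EuclideanSpace ℝ ι => lam i :=
    fun i => (EuclideanSpace.proj (𝕜 := ℝ) i).continuous
  -- `Mult` is closed
  have hMclosed : IsClosed (Mult I q x xs) := by
    have heq : Mult I q x xs =
        ((fun lam : EuclideanSpace ℝ ι => ∑ i, lam i • a i) ⁻¹' {xs}) ∩
        ⋂ i ∈ I, ({lam : EuclideanSpace ℝ ι | 0 ≤ lam i} ∩
          {lam : EuclideanSpace ℝ ι | lam i * q i x = 0}) := by
      ext lam
      simp only [Mult, Set.mem_setOf_eq, Set.mem_inter_iff, Set.mem_preimage,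
        Set.mem_singleton_iff, Set.mem_iInter, ha]
    rw [heq]
    refine IsClosed.inter ?_ (isClosed_biInter fun i _ => ?_)
    · exact IsClosed.preimage
        (continuous_finset_sum _ fun i _ => ((hconti i).smul continuous_const))
        isClosed_singleton
    · exact (isClosed_le continuous_const (hconti i)).inter
        (isClosed_eq ((hconti i).mul continuous_const) continuous_const)
  -- `Mult` is convex
  have hMconvex : Convex ℝ (Mult I q x xs) := by
    rintro u ⟨hu1, hu2⟩ v ⟨hv1, hv2⟩ s t hs ht hst
    refine ⟨?_, fun i hi => ⟨?_, ?_⟩⟩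
    · have happ : ∀ i : ι, (s • u + t • v) i • a i
          = s • (u i • a i) + t • (v i • a i) := by
        intro i
        have : (s • u + t • v) i = s * u i + t * v i := by simp
        rw [this, add_smul, mul_smul, mul_smul]
      calc ∑ i, (s • u + t • v) i • a i
          = ∑ i, (s • (u i • a i) + t • (v i • a i)) :=
            Finset.sum_congr rfl fun i _ => happ i
      _ = s • ∑ i, u i • a i + t • ∑ i, v i • a i := by
            rw [Finset.sum_add_distrib, Finset.smul_sum, Finset.smul_sum]
      _ = xs := by rw [hu1, hv1, ← add_smul, hst, one_smul]
    · have : (s • u + t • v) i = s * u i + t * v i := by simp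
      rw [this]
      exact add_nonneg (mul_nonneg hs (hu2 i hi).1) (mul_nonneg ht (hv2 i hi).1)
    · have : (s • u + t • v) i = s * u i + t * v i := by simp
      rw [this]
      have h1 := (hu2 i hi).2
      have h2 := (hv2 i hi).2
      nlinarith [h1, h2]
  obtain ⟨lam0, hlam0, hmin⟩ := exists_min_norm hne hMclosed hMconvex
  refine ⟨lam0, hlam0, ?_⟩
  -- the key quadratic inequality
  set M : ℝ := ∑ i, |lam0 i| with hM
  have hMnn : 0 ≤ M := Finset.sum_nonneg fun i _ => abs_nonneg _
  set Kc : ℝ := Real.sqrt (Fintype.card ι) with hKc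
  have hKcnn : 0 ≤ Kc := Real.sqrt_nonneg _
  set C : ℝ := M + 1 + 2 * Kc * (γ * ‖xs‖) with hC
  have hCnn : 0 ≤ C := by positivity
  have key : ‖lam0‖ ^ 2 ≤ γ * ‖xs‖ * ‖lam0‖ := by
    have hsuff : ∀ ε1 : ℝ, 0 < ε1 → ‖lam0‖ ^ 2 ≤ γ * ‖xs‖ * ‖lam0‖ + ε1 * C := by
      intro ε1 hε1
      obtain ⟨z, hzE, hzIpos, hzI0⟩ := approx_z E I hdisj q x xs lam0 hlam0 hmin hε1
      set β : ℝ := ‖lam0‖ + 2 * ε1 * Kc with hβ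
      have hβnn : 0 ≤ β := by positivity
      set D : ℝ := ‖z‖ + γ * β with hD
      have hDnn : 0 ≤ D := by positivity
      set ε2 : ℝ := min ε1 (ε1 / (1 + M * D)) with hε2def
      have hden : (0:ℝ) < 1 + M * D := by positivity
      have hε2pos : 0 < ε2 := lt_min hε1 (by positivity)
      have hε2le : ε2 ≤ ε1 := min_le_left _ _
      have hε2bound : M * ε2 * D ≤ ε1 := by
        have h1 : ε2 ≤ ε1 / (1 + M * D) := min_le_right _ _
        have h2 : M * ε2 * D ≤ M * (ε1 / (1 + M * D)) * D := by
          have := mul_le_mul_of_nonneg_left h1 hMnn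
          exact mul_le_mul_of_nonneg_right this hDnn
        refine h2.trans ?_
        have h3 : M * (ε1 / (1 + M * D)) * D = ε1 * ((M * D) / (1 + M * D)) := by ring
        have h4 : (M * D) / (1 + M * D) ≤ 1 := by
          rw [div_le_one hden]; linarith
        calc M * (ε1 / (1 + M * D)) * D = ε1 * ((M * D) / (1 + M * D)) := h3
        _ ≤ ε1 * 1 := mul_le_mul_of_nonneg_left h4 hε1.le
        _ = ε1 := mul_one _
      -- uniform Fréchet estimate at x
      have hfrechet : ∀ᶠ u' in 𝓝 x, ∀ i,
          |q i u' - q i x - ⟪a i, u' - x⟫| ≤ ε2 * ‖u' - x‖ := by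
        rw [eventually_all]
        intro i
        have hfd := (hdiffable i x).hasFDerivAt
        have hlo := hfd.isLittleO
        have := hlo.def hε2pos
        refine this.mono fun u' hu' => ?_
        rw [hpair i (u' - x)]
        simpa [Real.norm_eq_abs] using hu'
      obtain ⟨δ2, hδ2pos, hδ2⟩ := Metric.eventually_nhds_iff.mp hfrechet
      -- eventual facts along t → 0⁺
      have hcurve_cont : Continuous fun t : ℝ => x + t • z :=
        continuous_const.add (continuous_id.smul continuous_const)
      have hcurve_tendsto : Filter.Tendsto (fun t : ℝ => x + t • z) (𝓝[>] 0) (𝓝 x) := by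
        have h0 : Filter.Tendsto (fun t : ℝ => x + t • z) (𝓝 0) (𝓝 (x + (0:ℝ) • z)) :=
          hcurve_cont.tendsto 0
        simp only [zero_smul, add_zero] at h0
        exact h0.mono_left nhdsWithin_le_nhds
      have hUt : ∀ᶠ t in 𝓝[>] (0:ℝ), x + t • z ∈ U := hcurve_tendsto.eventually hU
      have htaylor : ∀ᶠ t in 𝓝[>] (0:ℝ), ∀ i,
          |q i (x + t • z) - q i x - t * ⟪a i, z⟫| ≤ ε2 * t := by
        have hall : ∀ i : ι, ∀ᶠ t in 𝓝[>] (0:ℝ),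
            |q i (x + t • z) - q i x - t * ⟪a i, z⟫| ≤ ε2 * t := by
          intro i
          have hcd : HasDerivAt (fun t : ℝ => x + t • z) z 0 := by
            have h1 : HasDerivAt (fun t : ℝ => t • z) ((1:ℝ) • z) 0 :=
              (hasDerivAt_id (0:ℝ)).smul_const z
            rw [one_smul] at h1
            exact h1.const_add x
          have hx0 : x + (0:ℝ) • z = x := by simp
          have hfd : HasFDerivAt (q i) (fderiv ℝ (q i) x) ((fun t : ℝ => x + t • z) 0) := by
            rw [show (fun t : ℝ => x + t • z) 0 = x from hx0]
            exact (hdiffable i x).hasFDerivAt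
          have hcomp : HasDerivAt (fun t : ℝ => q i (x + t • z)) (fderiv ℝ (q i) x z) 0 :=
            hfd.comp_hasDerivAt 0 hcd
          have hlo := (hasDerivAt_iff_isLittleO.mp hcomp).def hε2pos
          have hlo' : ∀ᶠ t in 𝓝 (0:ℝ),
              |q i (x + t • z) - q i x - t * ⟪a i, z⟫| ≤ ε2 * |t| := by
            refine hlo.mono fun t ht => ?_
            rw [hpair i z]
            simpa [Real.norm_eq_abs, hx0, smul_eq_mul, sub_zero] using ht
          refine (hlo'.filter_mono nhdsWithin_le_nhds).and eventually_mem_nhdsWithin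
            |>.mono ?_
          rintro t ⟨h1, h2⟩
          rw [abs_of_pos (Set.mem_Ioi.mp h2)] at h1
          exact h1
        exact eventually_all.mpr hall
      have hneg : ∀ᶠ t in 𝓝[>] (0:ℝ), ∀ i, q i x < 0 → q i (x + t • z) < 0 := by
        rw [eventually_all]
        intro i
        by_cases hqi : q i x < 0
        · have hten : Filter.Tendsto (fun t : ℝ => q i (x + t • z)) (𝓝[>] 0) (𝓝 (q i x)) := by
            have := ((hq i).continuous.comp hcurve_cont).tendsto 0
            simp only [Function.comp, zero_smul, add_zero] at this
            exact this.mono_left nhdsWithin_le_nhds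
          exact (hten.eventually (eventually_lt_nhds hqi)).mono fun t ht _ => ht
        · exact Filter.Eventually.of_forall fun t h => absurd h hqi
      have hsmall : ∀ᶠ t in 𝓝[>] (0:ℝ), t * D < δ2 := by
        have hten : Filter.Tendsto (fun t : ℝ => t * D) (𝓝 (0:ℝ)) (𝓝 ((0:ℝ) * D)) :=
          (continuous_id.mul continuous_const).tendsto 0
        rw [zero_mul] at hten
        exact ((hten.eventually (eventually_lt_nhds hδ2pos)).filter_mono nhdsWithin_le_nhds)
      have htpos : ∀ᶠ t in 𝓝[>] (0:ℝ), 0 < t := eventually_mem_nhdsWithin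
      obtain ⟨t, htU, htay, htneg, htD, ht0⟩ :=
        (hUt.and (htaylor.and (hneg.and (hsmall.and htpos)))).exists
      set u : EuclideanSpace ℝ (Fin n) := x + t • z with huu
      -- the Θ-point
      set θ : EuclideanSpace ℝ ι := WithLp.toLp 2 (fun i => if i ∈ E then 0 else min (q i u) 0) with hθ
      have hθΘ : θ ∈ Theta E I := by
        constructor
        · intro i hi
          simp [hθ, hi]
        · intro i hi
          by_cases h : i ∈ E
          · simp [hθ, h]
          · simp only [hθ, if_neg h]
            exact min_le_right _ _
      -- componentwise bound
      have hcomp : ∀ i, |q i u - θ i| ≤ t * (|lam0 i| + 2 * ε1) := by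
        intro i
        have htay_i := htay i
        have hEI : i ∈ E ∪ I := hunion ▸ Finset.mem_univ i
        by_cases hiE : i ∈ E
        · have hqx : q i x = 0 := hfeas.1 i hiE
          have hθi : θ i = 0 := by simp [hθ, hiE]
          rw [hθi, sub_zero]
          have h1 := abs_le.mp htay_i
          have h2 := abs_le.mp (hzE i hiE)
          rw [hqx, sub_zero] at h1
          have hla := le_abs_self (lam0 i)
          have hlb := neg_abs_le (lam0 i)
          have hub : t * ⟪a i, z⟫ ≤ t * (|lam0 i| + ε1) :=
            mul_le_mul_of_nonneg_left (by linarith) ht0.le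
          have hlbb : t * (-(|lam0 i| + ε1)) ≤ t * ⟪a i, z⟫ :=
            mul_le_mul_of_nonneg_left (by linarith) ht0.le
          rw [abs_le]
          constructor <;> nlinarith
        · have hiI : i ∈ I := (Finset.mem_union.mp hEI).resolve_left hiE
          have hθi : θ i = min (q i u) 0 := by simp [hθ, hiE]
          rw [hθi]
          by_cases hqu : q i u ≤ 0
          · rw [min_eq_left hqu, sub_self, abs_zero]
            positivity
          · push_neg at hqu
            rw [min_eq_right hqu.le, sub_zero, abs_of_pos hqu]
            by_cases hact : q i x = 0
            · have h1 := abs_le.mp htay_i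
              rw [hact, sub_zero] at h1
              by_cases hpos : 0 < lam0 i
              · have h2 := abs_le.mp (hzIpos i hiI hact hpos)
                have hla := le_abs_self (lam0 i)
                have hub : t * ⟪a i, z⟫ ≤ t * (|lam0 i| + ε1) :=
                  mul_le_mul_of_nonneg_left (by linarith) ht0.le
                nlinarith
              · have hle : lam0 i ≤ 0 := not_lt.mp hpos
                have h2 := hzI0 i hiI hact hle
                have hub : t * ⟪a i, z⟫ ≤ t * ε1 :=
                  mul_le_mul_of_nonneg_left h2 ht0.le
                have : (0:ℝ) ≤ |lam0 i| := abs_nonneg _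
                nlinarith
            · have hqlt : q i x < 0 := lt_of_le_of_ne (hfeas.2 i hiI) hact
              exact absurd (htneg i hqlt) (not_lt.mpr hqu.le)
      -- norm bound on the Θ-distance
      have hvec : ‖(show EuclideanSpace ℝ ι from WithLp.toLp 2 (fun i => q i u)) - θ‖ ≤ t * β := by
        have hb : ∀ i, |((show EuclideanSpace ℝ ι from WithLp.toLp 2 (fun i => q i u)) - θ) i|
            ≤ (show EuclideanSpace ℝ ι from WithLp.toLp 2 (fun i => t * (|lam0 i| + 2 * ε1))) i := by
          intro i
          have : ((show EuclideanSpace ℝ ι from WithLp.toLp 2 (fun i => q i u)) - θ) i = q i u - θ i := by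
            simp
          rw [this]
          exact hcomp i
        refine (euclid_norm_le_of_abs_le hb).trans ?_
        have hsm : (show EuclideanSpace ℝ ι from WithLp.toLp 2 (fun i => t * (|lam0 i| + 2 * ε1)))
            = t • (show EuclideanSpace ℝ ι from WithLp.toLp 2 (fun i => |lam0 i| + 2 * ε1)) := rfl
        rw [hsm, norm_smul, Real.norm_eq_abs, abs_of_pos ht0]
        refine mul_le_mul_of_nonneg_left ?_ ht0.le
        have := euclid_norm_abs_add_const lam0 (2 * ε1) (by positivity)
        rw [hβ]
        calc ‖(show EuclideanSpace ℝ ι from WithLp.toLp 2 (fun i => |lam0 i| + 2 * ε1))‖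
            ≤ ‖lam0‖ + 2 * ε1 * Real.sqrt (Fintype.card ι) := this
        _ = ‖lam0‖ + 2 * ε1 * Kc := by rw [hKc]
      have hdistΘ : Metric.infDist (show EuclideanSpace ℝ ι from WithLp.toLp 2 (fun i => q i u))
          (Theta E I) ≤ t * β := by
        refine (Metric.infDist_le_dist_of_mem hθΘ).trans ?_
        rw [dist_eq_norm]
        exact hvec
      have hdistΓ : Metric.infDist u (Feas E I q) ≤ γ * (t * β) :=
        (hUdist u htU).trans (mul_le_mul_of_nonneg_left hdistΘ hγ.le)
      -- Feas is closed and nonempty; take a nearest point u'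
      have hΓclosed : IsClosed (Feas E I q) := by
        have heq : Feas E I q =
            (⋂ i ∈ E, {y : EuclideanSpace ℝ (Fin n) | q i y = 0}) ∩
            ⋂ i ∈ I, {y : EuclideanSpace ℝ (Fin n) | q i y ≤ 0} := by
          ext y
          simp [Feas, Set.mem_iInter]
        rw [heq]
        exact (isClosed_biInter fun i _ =>
            isClosed_eq (hq i).continuous continuous_const).inter
          (isClosed_biInter fun i _ => isClosed_le (hq i).continuous continuous_const)
      obtain ⟨u', hu'Γ, hu'd⟩ := hΓclosed.exists_infDist_eq_dist ⟨x, hfeas⟩ u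
      have hdu' : dist u u' ≤ γ * (t * β) := hu'd ▸ hdistΓ
      have hux : u - x = t • z := by rw [huu]; abel
      have hu'x : ‖u' - x‖ ≤ t * D := by
        have h1 : ‖u' - x‖ ≤ ‖u' - u‖ + ‖u - x‖ := norm_sub_le_norm_sub_add_norm_sub _ _ _
        have h2 : ‖u' - u‖ = dist u u' := by rw [dist_comm, dist_eq_norm]
        have h3 : ‖u - x‖ = t * ‖z‖ := by
          rw [hux, norm_smul, Real.norm_eq_abs, abs_of_pos ht0]
        rw [h2, h3] at h1
        rw [hD]
        calc ‖u' - x‖ ≤ γ * (t * β) + t * ‖z‖ := by linarith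
        _ = t * (‖z‖ + γ * β) := by ring
      have hu'δ : dist u' x < δ2 := by
        rw [dist_eq_norm]
        exact lt_of_le_of_lt hu'x htD
      have hfr := hδ2 hu'δ
      -- ⟪xs, u' - x⟫ is small
      have hstepk : ⟪xs, u' - x⟫ ≤ M * (ε2 * ‖u' - x‖) := by
        rw [← hlam0.1, sum_inner]
        have hterm : ∀ i ∈ Finset.univ (α := ι),
            ⟪lam0 i • a i, u' - x⟫ ≤ |lam0 i| * (ε2 * ‖u' - x‖) := by
          intro i _
          rw [real_inner_smul_left]
          have herr := abs_le.mp (hfr i)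
          have hmain : lam0 i * (q i u' - q i x) ≤ 0 := by
            have hEI : i ∈ E ∪ I := hunion ▸ Finset.mem_univ i
            by_cases hiE : i ∈ E
            · rw [hfeas.1 i hiE, hu'Γ.1 i hiE]
              simp
            · have hiI : i ∈ I := (Finset.mem_union.mp hEI).resolve_left hiE
              have h1 := (hlam0.2 i hiI).1
              have h2 := (hlam0.2 i hiI).2
              have h3 := hu'Γ.2 i hiI
              nlinarith
          have hprod : lam0 i * (⟪a i, u' - x⟫ - (q i u' - q i x))
              ≤ |lam0 i| * (ε2 * ‖u' - x‖) := by
            have h4 : |lam0 i * (⟪a i, u' - x⟫ - (q i u' - q i x))|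
                ≤ |lam0 i| * (ε2 * ‖u' - x‖) := by
              rw [abs_mul]
              refine mul_le_mul_of_nonneg_left ?_ (abs_nonneg _)
              rw [abs_sub_comm]
              calc |q i u' - q i x - ⟪a i, u' - x⟫| ≤ ε2 * ‖u' - x‖ := hfr i
              _ = ε2 * ‖u' - x‖ := rfl
            exact (le_abs_self _).trans h4
          nlinarith
        calc ∑ i, ⟪lam0 i • a i, u' - x⟫ ≤ ∑ i, |lam0 i| * (ε2 * ‖u' - x‖) :=
              Finset.sum_le_sum hterm
        _ = M * (ε2 * ‖u' - x‖) := by rw [hM, Finset.sum_mul]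
      -- lower bound on ⟪xs, z⟫
      have hxz : ‖lam0‖ ^ 2 - ε1 * M ≤ ⟪xs, z⟫ := by
        have hinner : ⟪xs, z⟫ = ∑ i, lam0 i * ⟪a i, z⟫ := by
          rw [← hlam0.1, sum_inner]
          exact Finset.sum_congr rfl fun i _ => real_inner_smul_left _ _ _
        rw [hinner]
        have hterm : ∀ i ∈ Finset.univ (α := ι),
            lam0 i ^ 2 - |lam0 i| * ε1 ≤ lam0 i * ⟪a i, z⟫ := by
          intro i _
          by_cases h0 : lam0 i = 0
          · rw [h0]; simp
          · have hri : |⟪a i, z⟫ - lam0 i| ≤ ε1 := by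
              have hEI : i ∈ E ∪ I := hunion ▸ Finset.mem_univ i
              by_cases hiE : i ∈ E
              · exact hzE i hiE
              · have hiI : i ∈ I := (Finset.mem_union.mp hEI).resolve_left hiE
                have h1 := (hlam0.2 i hiI).1
                have h2 := (hlam0.2 i hiI).2
                have hpos : 0 < lam0 i := lt_of_le_of_ne h1 (Ne.symm h0)
                have hact : q i x = 0 := by
                  rcases mul_eq_zero.mp h2 with h | h
                  · exact absurd h h0
                  · exact h
                exact hzIpos i hiI hact hpos
            have h4 : |lam0 i * (⟪a i, z⟫ - lam0 i)| ≤ |lam0 i| * ε1 := by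
              rw [abs_mul]
              exact mul_le_mul_of_nonneg_left hri (abs_nonneg _)
            have h5 := neg_abs_le (lam0 i * (⟪a i, z⟫ - lam0 i))
            nlinarith
        have hsum := Finset.sum_le_sum hterm
        have h6 : ∑ i, (lam0 i ^ 2 - |lam0 i| * ε1) = ‖lam0‖ ^ 2 - M * ε1 := by
          rw [Finset.sum_sub_distrib, ← euclid_norm_sq', hM, Finset.sum_mul]
        rw [h6] at hsum
        calc ‖lam0‖ ^ 2 - ε1 * M = ‖lam0‖ ^ 2 - M * ε1 := by ring
        _ ≤ ∑ i, lam0 i * ⟪a i, z⟫ := hsum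
      -- assemble
      have hsplit : ⟪xs, u - x⟫ = ⟪xs, u' - x⟫ + ⟪xs, u - u'⟫ := by
        rw [← inner_add_right]
        congr 1
        abel
      have hcs : ⟪xs, u - u'⟫ ≤ ‖xs‖ * (γ * (t * β)) := by
        refine (real_inner_le_norm _ _).trans ?_
        refine mul_le_mul_of_nonneg_left ?_ (norm_nonneg _)
        rw [← dist_eq_norm]
        exact hdu'
      have htz : ⟪xs, u - x⟫ = t * ⟪xs, z⟫ := by
        rw [hux, real_inner_smul_right]
      have hchain : t * ⟪xs, z⟫ ≤ M * (ε2 * (t * D)) + ‖xs‖ * (γ * (t * β)) := by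
        rw [← htz, hsplit]
        have h7 : M * (ε2 * ‖u' - x‖) ≤ M * (ε2 * (t * D)) := by
          refine mul_le_mul_of_nonneg_left ?_ hMnn
          exact mul_le_mul_of_nonneg_left hu'x hε2pos.le
        linarith [hstepk, hcs]
      have hdiv : ‖lam0‖ ^ 2 - ε1 * M ≤ M * (ε2 * D) + ‖xs‖ * (γ * β) := by
        have h8 : t * (‖lam0‖ ^ 2 - ε1 * M) ≤ t * (M * (ε2 * D) + ‖xs‖ * (γ * β)) := by
          calc t * (‖lam0‖ ^ 2 - ε1 * M) ≤ t * ⟪xs, z⟫ :=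
                mul_le_mul_of_nonneg_left hxz ht0.le
          _ ≤ M * (ε2 * (t * D)) + ‖xs‖ * (γ * (t * β)) := hchain
          _ = t * (M * (ε2 * D) + ‖xs‖ * (γ * β)) := by ring
        exact le_of_mul_le_mul_left h8 ht0
      have h9 : M * (ε2 * D) ≤ ε1 := by
        calc M * (ε2 * D) = M * ε2 * D := by ring
        _ ≤ ε1 := hε2bound
      have h10 : ‖xs‖ * (γ * β) = γ * ‖xs‖ * ‖lam0‖ + ε1 * (2 * Kc * (γ * ‖xs‖)) := by
        rw [hβ]; ring
      rw [hC]
      nlinarith [hdiv, h9, h10]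
    refine le_of_forall_pos_le_add fun ε hε => ?_
    have h11 := hsuff (ε / (C + 1)) (by positivity)
    have h12 : ε / (C + 1) * C ≤ ε := by
      rw [div_mul_eq_mul_div, div_le_iff₀ (by positivity)]
      nlinarith
    linarith
  by_cases h0 : ‖lam0‖ = 0
  · rw [h0]
    positivity
  · have hpos : 0 < ‖lam0‖ := lt_of_le_of_ne (norm_nonneg _) (Ne.symm h0)
    have : ‖lam0‖ * ‖lam0‖ ≤ γ * ‖xs‖ * ‖lam0‖ := by
      calc ‖lam0‖ * ‖lam0‖ = ‖lam0‖ ^ 2 := by ring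
      _ ≤ γ * ‖xs‖ * ‖lam0‖ := key
    exact le_of_mul_le_mul_right this hpos


end
end
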